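/- arXiv:2507.03782 — 6 statements merged into one kernel-verified Lean document; each statement's English description precedes it below -/
import Mathlib

section
/- Let U₁, V₁ ⊆ H₁ be open sets and let φ : U₁ → V₁ and ψ : V₁ → H₁ be (H₁,H₂)-tame maps. Then the composition ψ ∘ φ : U₁ → H₁ is (H₁,H₂)-tame. -/
open Metric Set

section TameHelpers

variable {H₁ H₂ : Type*}
  [NormedAddCommGroup H₁] [InnerProductSpace ℝ H₁] [CompleteSpace H₁]
  [NormedAddCommGroup H₂] [InnerProductSpace ℝ H₂] [CompleteSpace H₂]

lemma contDiffAt_of_preimage (ι : H₂ →L[ℝ] H₁) {U : Set H₁}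
    (hU : IsOpen U) {φ₂ : H₂ → H₂} (h : ContDiffOn ℝ 2 φ₂ (ι ⁻¹' U))
    {y : H₂} (hy : ι y ∈ U) : ContDiffAt ℝ 2 φ₂ y :=
  h.contDiffAt ((hU.preimage ι.continuous).mem_nhds hy)

lemma hasFDerivAt_fderiv_of_preimage (ι : H₂ →L[ℝ] H₁) {U : Set H₁}
    (hU : IsOpen U) {φ₂ : H₂ → H₂} (h : ContDiffOn ℝ 2 φ₂ (ι ⁻¹' U))
    {y : H₂} (hy : ι y ∈ U) :
    HasFDerivAt (fderiv ℝ φ₂) (fderiv ℝ (fderiv ℝ φ₂) y) y := by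
  have h1 : ContDiffAt ℝ 1 (fderiv ℝ φ₂) y :=
    (contDiffAt_of_preimage ι hU h hy).fderiv_right le_rfl
  exact (h1.differentiableAt one_ne_zero).hasFDerivAt

lemma fderiv_compat (ι : H₂ →L[ℝ] H₁) {U : Set H₁} (hU : IsOpen U)
    {φ : H₁ → H₁} {φ₂ : H₂ → H₂}
    (hφ : ContDiffOn ℝ 2 φ U)
    (hc : ∀ y : H₂, ι y ∈ U → φ (ι y) = ι (φ₂ y))
    (hφ₂ : ContDiffOn ℝ 2 φ₂ (ι ⁻¹' U))
    {y : H₂} (hy : ι y ∈ U) :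
    ι.comp (fderiv ℝ φ₂ y) = (fderiv ℝ φ (ι y)).comp ι := by
  have h2 : DifferentiableAt ℝ φ₂ y :=
    (contDiffAt_of_preimage ι hU hφ₂ hy).differentiableAt two_ne_zero
  have h1 : DifferentiableAt ℝ φ (ι y) :=
    (hφ.contDiffAt (hU.mem_nhds hy)).differentiableAt two_ne_zero
  have hA : HasFDerivAt (fun z => ι (φ₂ z)) (ι.comp (fderiv ℝ φ₂ y)) y :=
    ι.hasFDerivAt.comp y h2.hasFDerivAt
  have hB : HasFDerivAt (fun z => φ (ι z)) ((fderiv ℝ φ (ι y)).comp ι) y :=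
    h1.hasFDerivAt.comp y ι.hasFDerivAt
  have heq : (fun z => ι (φ₂ z)) =ᶠ[nhds y] (fun z => φ (ι z)) := by
    filter_upwards [(hU.preimage ι.continuous).mem_nhds hy] with z hz
    exact (hc z hz).symm
  exact hA.unique (hB.congr_of_eventuallyEq heq)

lemma fderiv_compat_apply (ι : H₂ →L[ℝ] H₁) {U : Set H₁} (hU : IsOpen U)
    {φ : H₁ → H₁} {φ₂ : H₂ → H₂}
    (hφ : ContDiffOn ℝ 2 φ U)
    (hc : ∀ y : H₂, ι y ∈ U → φ (ι y) = ι (φ₂ y))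
    (hφ₂ : ContDiffOn ℝ 2 φ₂ (ι ⁻¹' U))
    {y : H₂} (hy : ι y ∈ U) (ξ : H₂) :
    ι (fderiv ℝ φ₂ y ξ) = fderiv ℝ φ (ι y) (ι ξ) := by
  have h := DFunLike.congr_fun (fderiv_compat ι hU hφ hc hφ₂ hy) ξ
  simpa using h

lemma fderiv2_compat (ι : H₂ →L[ℝ] H₁) {U : Set H₁} (hU : IsOpen U)
    {φ : H₁ → H₁} {φ₂ : H₂ → H₂}
    (hφ : ContDiffOn ℝ 2 φ U)
    (hc : ∀ y : H₂, ι y ∈ U → φ (ι y) = ι (φ₂ y))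
    (hφ₂ : ContDiffOn ℝ 2 φ₂ (ι ⁻¹' U))
    {y : H₂} (hy : ι y ∈ U) (ξ η : H₂) :
    ι (fderiv ℝ (fderiv ℝ φ₂) y ξ η) = fderiv ℝ (fderiv ℝ φ) (ι y) (ι ξ) (ι η) := by
  set P : (H₂ →L[ℝ] H₂) →L[ℝ] (H₂ →L[ℝ] H₁) := ContinuousLinearMap.compL ℝ H₂ H₂ H₁ ι with hP
  set Q : (H₁ →L[ℝ] H₁) →L[ℝ] (H₂ →L[ℝ] H₁) :=
    (ContinuousLinearMap.compL ℝ H₂ H₁ H₁).flip ι with hQ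
  have hA : HasFDerivAt (fun z => P (fderiv ℝ φ₂ z))
      (P.comp (fderiv ℝ (fderiv ℝ φ₂) y)) y :=
    P.hasFDerivAt.comp y (hasFDerivAt_fderiv_of_preimage ι hU hφ₂ hy)
  have hφ1 : ContDiffAt ℝ 1 (fderiv ℝ φ) (ι y) :=
    (hφ.contDiffAt (hU.mem_nhds hy)).fderiv_right le_rfl
  have hB : HasFDerivAt (fun z : H₂ => Q (fderiv ℝ φ (ι z)))
      (Q.comp ((fderiv ℝ (fderiv ℝ φ) (ι y)).comp ι)) y := by
    have h1 : HasFDerivAt (fun z : H₂ => fderiv ℝ φ (ι z))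
        ((fderiv ℝ (fderiv ℝ φ) (ι y)).comp ι) y :=
      ((hφ1.differentiableAt one_ne_zero).hasFDerivAt).comp y ι.hasFDerivAt
    exact Q.hasFDerivAt.comp y h1
  have heq : (fun z => P (fderiv ℝ φ₂ z)) =ᶠ[nhds y] (fun z : H₂ => Q (fderiv ℝ φ (ι z))) := by
    filter_upwards [(hU.preimage ι.continuous).mem_nhds hy] with z hz
    have := fderiv_compat ι hU hφ hc hφ₂ hz
    simp only [hP, hQ, ContinuousLinearMap.compL_apply, ContinuousLinearMap.flip_apply]
    exact this
  have := hA.unique (hB.congr_of_eventuallyEq heq)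
  have h2 := DFunLike.congr_fun (DFunLike.congr_fun this ξ) η
  simpa [hP, hQ, ContinuousLinearMap.compL_apply, ContinuousLinearMap.flip_apply] using h2

lemma segment_deriv_bound {E : Type*} [NormedAddCommGroup E] [NormedSpace ℝ E]
    (g : H₂ → E) (g' : H₂ → H₂ →L[ℝ] E) (w₀ w : H₂) (M : ℝ)
    (hg : ∀ t ∈ Icc (0:ℝ) 1, HasFDerivAt g (g' (w₀ + t • (w - w₀))) (w₀ + t • (w - w₀)))
    (hM : ∀ t ∈ Icc (0:ℝ) 1, ‖g' (w₀ + t • (w - w₀)) (w - w₀)‖ ≤ M) :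
    ‖g w - g w₀‖ ≤ M := by
  have line : ∀ t : ℝ, HasDerivAt (fun s : ℝ => w₀ + s • (w - w₀)) (w - w₀) t := by
    intro t
    simpa using ((hasDerivAt_id t).smul_const (w - w₀)).const_add w₀
  have key : ∀ t ∈ Icc (0:ℝ) 1,
      HasDerivWithinAt (fun s : ℝ => g (w₀ + s • (w - w₀)))
        (g' (w₀ + t • (w - w₀)) (w - w₀)) (Icc 0 1) t := by
    intro t ht
    exact ((hg t ht).comp_hasDerivAt t (line t)).hasDerivWithinAt
  have := norm_image_sub_le_of_norm_deriv_le_segment_01' key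
    (fun t ht => hM t (Ico_subset_Icc_self ht))
  simpa using this

lemma tame_local_bounds (ι : H₂ →L[ℝ] H₁) (hι_norm : ∀ x : H₂, ‖ι x‖ ≤ ‖x‖)
    {U : Set H₁} (hU : IsOpen U) {φ₂ : H₂ → H₂}
    (hφ₂ : ContDiffOn ℝ 2 φ₂ (ι ⁻¹' U))
    {c : H₁} {r : ℝ} (hr : 0 < r) (hball : ball c r ⊆ U)
    {κ : ℝ} (hκ : 0 < κ)
    (hest : ∀ y : H₂, ι y ∈ ball c r → ∀ ξ η : H₂,
      ‖fderiv ℝ (fderiv ℝ φ₂) y ξ η‖ ≤ κ * (‖ι ξ‖ * ‖η‖ + ‖ξ‖ * ‖ι η‖ + ‖y‖ * ‖ι ξ‖ * ‖ι η‖))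
    {w₀ : H₂} (hw₀ : ι w₀ ∈ ball c r) :
    ∃ a b : ℝ, 0 ≤ a ∧ 0 ≤ b ∧ ∀ w : H₂, ι w ∈ ball c r →
      (‖φ₂ w‖ ≤ a + b * ‖w‖) ∧
      ∀ ζ : H₂, ‖fderiv ℝ φ₂ w ζ‖ ≤ a * ‖ζ‖ + (a + b * ‖w‖) * ‖ι ζ‖ := by
  have hmemseg : ∀ w : H₂, ι w ∈ ball c r → ∀ t ∈ Icc (0:ℝ) 1,
      ι (w₀ + t • (w - w₀)) ∈ ball c r := by
    intro w hw t ht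
    have hconv : ι (w₀ + t • (w - w₀)) = (1 - t) • (ι w₀) + t • (ι w) := by
      simp only [map_add, map_smul, map_sub]
      module
    rw [hconv]
    exact (convex_ball c r) hw₀ hw (by linarith [ht.2]) ht.1 (by ring)
  have hιsub : ∀ w : H₂, ι w ∈ ball c r → ‖ι w - ι w₀‖ ≤ 2 * r := by
    intro w hw
    have h1 : dist (ι w) (ι w₀) ≤ dist (ι w) c + dist c (ι w₀) := dist_triangle _ _ _
    rw [mem_ball] at hw hw₀
    rw [← dist_eq_norm]
    rw [dist_comm c (ι w₀)] at h1
    linarith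
  have hsegnorm : ∀ (w : H₂), ∀ t ∈ Icc (0:ℝ) 1,
      ‖w₀ + t • (w - w₀)‖ ≤ ‖w₀‖ + ‖w - w₀‖ := by
    intro w t ht
    calc ‖w₀ + t • (w - w₀)‖ ≤ ‖w₀‖ + ‖t • (w - w₀)‖ := norm_add_le _ _
      _ ≤ ‖w₀‖ + ‖w - w₀‖ := by
          have : ‖t • (w - w₀)‖ = |t| * ‖w - w₀‖ := by rw [norm_smul, Real.norm_eq_abs]
          rw [this]
          have ht' : |t| ≤ 1 := abs_le.2 ⟨by linarith [ht.1], ht.2⟩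
          nlinarith [norm_nonneg (w - w₀)]
  have step1 : ∀ w : H₂, ι w ∈ ball c r → ∀ ζ : H₂,
      ‖fderiv ℝ φ₂ w ζ‖ ≤ ‖fderiv ℝ φ₂ w₀‖ * ‖ζ‖ +
        κ * (2 * r * ‖ζ‖ + ‖w - w₀‖ * ‖ι ζ‖ + (‖w₀‖ + ‖w - w₀‖) * (2 * r) * ‖ι ζ‖) := by
    intro w hw ζ
    have seg := segment_deriv_bound (fun z => fderiv ℝ φ₂ z ζ)
      (fun z => (ContinuousLinearMap.apply ℝ H₂ ζ).comp (fderiv ℝ (fderiv ℝ φ₂) z)) w₀ w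
      (κ * (2 * r * ‖ζ‖ + ‖w - w₀‖ * ‖ι ζ‖ + (‖w₀‖ + ‖w - w₀‖) * (2 * r) * ‖ι ζ‖))
      (fun t ht => (ContinuousLinearMap.apply ℝ H₂ ζ).hasFDerivAt.comp _
        (hasFDerivAt_fderiv_of_preimage ι hU hφ₂ (hball (hmemseg w hw t ht))))
      (fun t ht => by
        have hm := hmemseg w hw t ht
        have hb := hest _ hm (w - w₀) ζ
        have hι1 : ‖ι (w - w₀)‖ ≤ 2 * r := by rw [map_sub]; exact hιsub w hw
        have hn : ‖w₀ + t • (w - w₀)‖ ≤ ‖w₀‖ + ‖w - w₀‖ := hsegnorm w t ht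
        simp only [ContinuousLinearMap.coe_comp', Function.comp_apply,
          ContinuousLinearMap.apply_apply]
        calc ‖fderiv ℝ (fderiv ℝ φ₂) (w₀ + t • (w - w₀)) (w - w₀) ζ‖
            ≤ κ * (‖ι (w - w₀)‖ * ‖ζ‖ + ‖w - w₀‖ * ‖ι ζ‖ +
              ‖w₀ + t • (w - w₀)‖ * ‖ι (w - w₀)‖ * ‖ι ζ‖) := hb
          _ ≤ κ * (2 * r * ‖ζ‖ + ‖w - w₀‖ * ‖ι ζ‖ +
              (‖w₀‖ + ‖w - w₀‖) * (2 * r) * ‖ι ζ‖) := by gcongr)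
    have htri : ‖fderiv ℝ φ₂ w ζ‖ ≤
        ‖fderiv ℝ φ₂ w₀ ζ‖ + ‖fderiv ℝ φ₂ w ζ - fderiv ℝ φ₂ w₀ ζ‖ := by
      have := norm_add_le (fderiv ℝ φ₂ w₀ ζ) (fderiv ℝ φ₂ w ζ - fderiv ℝ φ₂ w₀ ζ)
      simpa using this
    have hop : ‖fderiv ℝ φ₂ w₀ ζ‖ ≤ ‖fderiv ℝ φ₂ w₀‖ * ‖ζ‖ :=
      (fderiv ℝ φ₂ w₀).le_opNorm ζ
    linarith
  have step0 : ∀ w : H₂, ι w ∈ ball c r →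
      ‖φ₂ w‖ ≤ ‖φ₂ w₀‖ + (‖fderiv ℝ φ₂ w₀‖ * ‖w - w₀‖ +
        κ * (2 * r * ‖w - w₀‖ + ‖w - w₀‖ * (2 * r) +
          (‖w₀‖ + ‖w - w₀‖) * (2 * r) * (2 * r))) := by
    intro w hw
    have seg := segment_deriv_bound φ₂ (fderiv ℝ φ₂) w₀ w
      (‖fderiv ℝ φ₂ w₀‖ * ‖w - w₀‖ + κ * (2 * r * ‖w - w₀‖ + ‖w - w₀‖ * (2 * r) +
          (‖w₀‖ + ‖w - w₀‖) * (2 * r) * (2 * r)))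
      (fun t ht => ((contDiffAt_of_preimage ι hU hφ₂
          (hball (hmemseg w hw t ht))).differentiableAt two_ne_zero).hasFDerivAt)
      (fun t ht => by
        have hm := hmemseg w hw t ht
        have hι1 : ‖ι (w - w₀)‖ ≤ 2 * r := by rw [map_sub]; exact hιsub w hw
        have hsub : ‖w₀ + t • (w - w₀) - w₀‖ ≤ ‖w - w₀‖ := by
          have h : w₀ + t • (w - w₀) - w₀ = t • (w - w₀) := by abel
          rw [h, norm_smul, Real.norm_eq_abs]
          have ht' : |t| ≤ 1 := abs_le.2 ⟨by linarith [ht.1], ht.2⟩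
          nlinarith [norm_nonneg (w - w₀)]
        calc ‖fderiv ℝ φ₂ (w₀ + t • (w - w₀)) (w - w₀)‖
            ≤ ‖fderiv ℝ φ₂ w₀‖ * ‖w - w₀‖ +
              κ * (2 * r * ‖w - w₀‖ + ‖w₀ + t • (w - w₀) - w₀‖ * ‖ι (w - w₀)‖ +
                (‖w₀‖ + ‖w₀ + t • (w - w₀) - w₀‖) * (2 * r) * ‖ι (w - w₀)‖) := by
              have := step1 _ hm (w - w₀)
              convert this using 4 <;> abel
          _ ≤ ‖fderiv ℝ φ₂ w₀‖ * ‖w - w₀‖ + κ * (2 * r * ‖w - w₀‖ + ‖w - w₀‖ * (2 * r) +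
                (‖w₀‖ + ‖w - w₀‖) * (2 * r) * (2 * r)) := by gcongr)
    have htri : ‖φ₂ w‖ ≤ ‖φ₂ w₀‖ + ‖φ₂ w - φ₂ w₀‖ := by
      have := norm_add_le (φ₂ w₀) (φ₂ w - φ₂ w₀)
      simpa using this
    linarith
  refine ⟨‖φ₂ w₀‖ + ‖fderiv ℝ φ₂ w₀‖ * (1 + ‖w₀‖) + κ * (1 + r) * (1 + r) * (1 + ‖w₀‖) * 8,
    ‖fderiv ℝ φ₂ w₀‖ + κ * (1 + r) * (1 + r) * 8, by positivity, by positivity, ?_⟩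
  intro w hw
  have hS : ‖w - w₀‖ ≤ ‖w₀‖ + ‖w‖ := by
    calc ‖w - w₀‖ ≤ ‖w‖ + ‖w₀‖ := norm_sub_le _ _
      _ = ‖w₀‖ + ‖w‖ := by ring
  constructor
  · calc ‖φ₂ w‖ ≤ ‖φ₂ w₀‖ + (‖fderiv ℝ φ₂ w₀‖ * ‖w - w₀‖ +
        κ * (2 * r * ‖w - w₀‖ + ‖w - w₀‖ * (2 * r) +
          (‖w₀‖ + ‖w - w₀‖) * (2 * r) * (2 * r))) := step0 w hw
      _ ≤ ‖φ₂ w₀‖ + (‖fderiv ℝ φ₂ w₀‖ * (‖w₀‖ + ‖w‖) +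
        κ * (2 * r * (‖w₀‖ + ‖w‖) + (‖w₀‖ + ‖w‖) * (2 * r) +
          (‖w₀‖ + (‖w₀‖ + ‖w‖)) * (2 * r) * (2 * r))) := by gcongr
      _ = (‖φ₂ w₀‖ + ‖fderiv ℝ φ₂ w₀‖ * ‖w₀‖ + κ * (4 * r * ‖w₀‖ + 8 * r * r * ‖w₀‖)) +
          (‖fderiv ℝ φ₂ w₀‖ + κ * (4 * r + 4 * r * r)) * ‖w‖ := by ring
      _ ≤ (‖φ₂ w₀‖ + ‖fderiv ℝ φ₂ w₀‖ * (1 + ‖w₀‖) + κ * (1 + r) * (1 + r) * (1 + ‖w₀‖) * 8) +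
          (‖fderiv ℝ φ₂ w₀‖ + κ * (1 + r) * (1 + r) * 8) * ‖w‖ := by
        gcongr ?_ + ?_ * ‖w‖
        · nlinarith [norm_nonneg (φ₂ w₀), norm_nonneg (fderiv ℝ φ₂ w₀), norm_nonneg w₀,
            mul_nonneg hκ.le (norm_nonneg w₀), mul_nonneg (mul_nonneg hκ.le hr.le) (norm_nonneg w₀),
            mul_nonneg (mul_nonneg (mul_nonneg hκ.le hr.le) hr.le) (norm_nonneg w₀),
            mul_nonneg hκ.le hr.le, mul_nonneg (mul_nonneg hκ.le hr.le) hr.le]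
        · nlinarith [mul_nonneg hκ.le hr.le, mul_nonneg (mul_nonneg hκ.le hr.le) hr.le, hκ.le,
            norm_nonneg (fderiv ℝ φ₂ w₀)]
  · intro ζ
    calc ‖fderiv ℝ φ₂ w ζ‖ ≤ ‖fderiv ℝ φ₂ w₀‖ * ‖ζ‖ +
        κ * (2 * r * ‖ζ‖ + ‖w - w₀‖ * ‖ι ζ‖ + (‖w₀‖ + ‖w - w₀‖) * (2 * r) * ‖ι ζ‖) :=
          step1 w hw ζ
      _ ≤ ‖fderiv ℝ φ₂ w₀‖ * ‖ζ‖ +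
        κ * (2 * r * ‖ζ‖ + (‖w₀‖ + ‖w‖) * ‖ι ζ‖ +
          (‖w₀‖ + (‖w₀‖ + ‖w‖)) * (2 * r) * ‖ι ζ‖) := by gcongr
      _ = (‖fderiv ℝ φ₂ w₀‖ + κ * (2 * r)) * ‖ζ‖ +
          (κ * (‖w₀‖ + 4 * r * ‖w₀‖) + (κ * (1 + 2 * r)) * ‖w‖) * ‖ι ζ‖ := by ring
      _ ≤ (‖φ₂ w₀‖ + ‖fderiv ℝ φ₂ w₀‖ * (1 + ‖w₀‖) + κ * (1 + r) * (1 + r) * (1 + ‖w₀‖) * 8) * ‖ζ‖ +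
          ((‖φ₂ w₀‖ + ‖fderiv ℝ φ₂ w₀‖ * (1 + ‖w₀‖) + κ * (1 + r) * (1 + r) * (1 + ‖w₀‖) * 8) +
            (‖fderiv ℝ φ₂ w₀‖ + κ * (1 + r) * (1 + r) * 8) * ‖w‖) * ‖ι ζ‖ := by
        gcongr ?_ * ‖ζ‖ + (?_ + ?_ * ‖w‖) * ‖ι ζ‖
        · nlinarith [norm_nonneg (φ₂ w₀), norm_nonneg (fderiv ℝ φ₂ w₀), norm_nonneg w₀,
            mul_nonneg (norm_nonneg (fderiv ℝ φ₂ w₀)) (norm_nonneg w₀),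
            mul_nonneg hκ.le (norm_nonneg w₀), mul_nonneg (mul_nonneg hκ.le hr.le) (norm_nonneg w₀),
            mul_nonneg (mul_nonneg (mul_nonneg hκ.le hr.le) hr.le) (norm_nonneg w₀),
            mul_nonneg hκ.le hr.le, mul_nonneg (mul_nonneg hκ.le hr.le) hr.le, hκ.le]
        · nlinarith [norm_nonneg (φ₂ w₀), norm_nonneg (fderiv ℝ φ₂ w₀), norm_nonneg w₀,
            mul_nonneg (norm_nonneg (fderiv ℝ φ₂ w₀)) (norm_nonneg w₀),
            mul_nonneg hκ.le (norm_nonneg w₀), mul_nonneg (mul_nonneg hκ.le hr.le) (norm_nonneg w₀),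
            mul_nonneg (mul_nonneg (mul_nonneg hκ.le hr.le) hr.le) (norm_nonneg w₀),
            mul_nonneg hκ.le hr.le, mul_nonneg (mul_nonneg hκ.le hr.le) hr.le, hκ.le]
        · nlinarith [mul_nonneg hκ.le hr.le, mul_nonneg (mul_nonneg hκ.le hr.le) hr.le, hκ.le,
            norm_nonneg (fderiv ℝ φ₂ w₀)]

lemma second_deriv_comp (ι : H₂ →L[ℝ] H₁) {U V : Set H₁} (hU : IsOpen U) (hV : IsOpen V)
    {φ₂ ψ₂ : H₂ → H₂}
    (hφ₂ : ContDiffOn ℝ 2 φ₂ (ι ⁻¹' U)) (hψ₂ : ContDiffOn ℝ 2 ψ₂ (ι ⁻¹' V))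
    (hm : MapsTo φ₂ (ι ⁻¹' U) (ι ⁻¹' V))
    {y : H₂} (hy : ι y ∈ U) (ξ η : H₂) :
    fderiv ℝ (fderiv ℝ (ψ₂ ∘ φ₂)) y ξ η =
      fderiv ℝ (fderiv ℝ ψ₂) (φ₂ y) (fderiv ℝ φ₂ y ξ) (fderiv ℝ φ₂ y η) +
      fderiv ℝ ψ₂ (φ₂ y) (fderiv ℝ (fderiv ℝ φ₂) y ξ η) := by
  have hyV : ι (φ₂ y) ∈ V := hm hy
  have heq : fderiv ℝ (ψ₂ ∘ φ₂) =ᶠ[nhds y]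
      fun z => (fderiv ℝ ψ₂ (φ₂ z)).comp (fderiv ℝ φ₂ z) := by
    filter_upwards [(hU.preimage ι.continuous).mem_nhds hy] with z hz
    exact fderiv_comp z
      ((contDiffAt_of_preimage ι hV hψ₂ (hm hz)).differentiableAt two_ne_zero)
      ((contDiffAt_of_preimage ι hU hφ₂ hz).differentiableAt two_ne_zero)
  have hL : HasFDerivAt (fun z => fderiv ℝ ψ₂ (φ₂ z))
      ((fderiv ℝ (fderiv ℝ ψ₂) (φ₂ y)).comp (fderiv ℝ φ₂ y)) y :=
    (hasFDerivAt_fderiv_of_preimage ι hV hψ₂ hyV).comp y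
      ((contDiffAt_of_preimage ι hU hφ₂ hy).differentiableAt two_ne_zero).hasFDerivAt
  have hM : HasFDerivAt (fderiv ℝ φ₂) (fderiv ℝ (fderiv ℝ φ₂) y) y :=
    hasFDerivAt_fderiv_of_preimage ι hU hφ₂ hy
  have hG : HasFDerivAt (fun z => (fderiv ℝ ψ₂ (φ₂ z)).comp (fderiv ℝ φ₂ z))
      ((ContinuousLinearMap.compL ℝ H₂ H₂ H₂ (fderiv ℝ ψ₂ (φ₂ y))).comp
          (fderiv ℝ (fderiv ℝ φ₂) y) +
        ((ContinuousLinearMap.compL ℝ H₂ H₂ H₂).flip (fderiv ℝ φ₂ y)).comp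
          ((fderiv ℝ (fderiv ℝ ψ₂) (φ₂ y)).comp (fderiv ℝ φ₂ y))) y :=
    hL.clm_comp hM
  have hfd : fderiv ℝ (fderiv ℝ (ψ₂ ∘ φ₂)) y =
      (ContinuousLinearMap.compL ℝ H₂ H₂ H₂ (fderiv ℝ ψ₂ (φ₂ y))).comp
          (fderiv ℝ (fderiv ℝ φ₂) y) +
        ((ContinuousLinearMap.compL ℝ H₂ H₂ H₂).flip (fderiv ℝ φ₂ y)).comp
          ((fderiv ℝ (fderiv ℝ ψ₂) (φ₂ y)).comp (fderiv ℝ φ₂ y)) := by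
    rw [heq.fderiv_eq]
    exact hG.fderiv
  rw [hfd]
  simp only [ContinuousLinearMap.add_apply, ContinuousLinearMap.coe_comp',
    Function.comp_apply, ContinuousLinearMap.compL_apply, ContinuousLinearMap.flip_apply]
  abel

end TameHelpers


open Metric Set

/-- A map `φ : U₁ → H₁` together with its restriction `φ₂ : U₂ → H₂`
(where `H₂` is included into `H₁` via `ι` and `U₂ = ι ⁻¹' U₁`) is
`(H₁,H₂)`-tame if `φ` is `C²` on `U₁`, its restriction to `U₂` takes values
in `H₂` (witnessed by `φ₂`) and is `C²` there, and the second derivative of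
the restriction satisfies the tameness estimate locally near every point
of `U₁`. -/
def IsTame {H₁ H₂ : Type*}
    [NormedAddCommGroup H₁] [InnerProductSpace ℝ H₁] [CompleteSpace H₁]
    [NormedAddCommGroup H₂] [InnerProductSpace ℝ H₂] [CompleteSpace H₂]
    (ι : H₂ →L[ℝ] H₁) (U₁ : Set H₁) (φ : H₁ → H₁) (φ₂ : H₂ → H₂) : Prop :=
  ContDiffOn ℝ 2 φ U₁ ∧
  (∀ y : H₂, ι y ∈ U₁ → φ (ι y) = ι (φ₂ y)) ∧
  ContDiffOn ℝ 2 φ₂ (ι ⁻¹' U₁) ∧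
  ∀ x ∈ U₁, ∃ W : Set H₁, W ⊆ U₁ ∧ IsOpen W ∧ x ∈ W ∧ ∃ κ : ℝ, 0 < κ ∧
    ∀ y : H₂, ι y ∈ W → ∀ ξ η : H₂,
      ‖fderiv ℝ (fderiv ℝ φ₂) y ξ η‖ ≤
        κ * (‖ι ξ‖ * ‖η‖ + ‖ξ‖ * ‖ι η‖ + ‖y‖ * ‖ι ξ‖ * ‖ι η‖)

set_option maxHeartbeats 1000000 in
/-- **Composition of tame maps is tame** (Theorem `thm:tame`).
If `φ : U₁ → V₁` and `ψ : V₁ → H₁` are `(H₁,H₂)`-tame, then so is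
`ψ ∘ φ : U₁ → H₁`. -/
theorem tame_comp {H₁ H₂ : Type*}
    [NormedAddCommGroup H₁] [InnerProductSpace ℝ H₁] [CompleteSpace H₁]
    [NormedAddCommGroup H₂] [InnerProductSpace ℝ H₂] [CompleteSpace H₂]
    (ι : H₂ →L[ℝ] H₁) (hι_inj : Function.Injective ι)
    (hι_dense : DenseRange ι) (hι_norm : ∀ x : H₂, ‖ι x‖ ≤ ‖x‖)
    {U₁ V₁ : Set H₁} (hU₁ : IsOpen U₁) (hV₁ : IsOpen V₁)
    {φ ψ : H₁ → H₁} {φ₂ ψ₂ : H₂ → H₂}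
    (hφ : IsTame ι U₁ φ φ₂) (hψ : IsTame ι V₁ ψ ψ₂)
    (hmaps : Set.MapsTo φ U₁ V₁) :
    IsTame ι U₁ (ψ ∘ φ) (ψ₂ ∘ φ₂) := by
  obtain ⟨hφ1, hφc, hφ2, hφest⟩ := hφ
  obtain ⟨hψ1, hψc, hψ2, hψest⟩ := hψ
  have hm2 : Set.MapsTo φ₂ (ι ⁻¹' U₁) (ι ⁻¹' V₁) := by
    intro y hy
    have h : ι (φ₂ y) = φ (ι y) := (hφc y hy).symm
    simp only [mem_preimage, h]
    exact hmaps hy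
  refine ⟨hψ1.comp hφ1 hmaps, ?_, hψ2.comp hφ2 hm2, ?_⟩
  · intro y hy
    have h2 := hφc y hy
    have h3 : ι (φ₂ y) ∈ V₁ := by rw [← h2]; exact hmaps hy
    simp only [Function.comp_apply, h2, hψc (φ₂ y) h3]
  · intro x hx
    obtain ⟨Wψ, hWψV, hWψo, hzWψ, κψ, hκψ, hestψ⟩ := hψest (φ x) (hmaps hx)
    obtain ⟨Wφ, hWφU, hWφo, hxWφ, κφ, hκφ, hestφ⟩ := hφest x hx
    obtain ⟨rψ, hrψ, hballψ⟩ := Metric.isOpen_iff.1 hWψo (φ x) hzWψ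
    have hballψV : ball (φ x) rψ ⊆ V₁ := fun u hu => hWψV (hballψ hu)
    have hφx : ContinuousAt φ x := hφ1.continuousOn.continuousAt (hU₁.mem_nhds hx)
    have hfd1 : ContinuousAt (fderiv ℝ φ) x :=
      (hφ1.continuousOn_fderiv_of_isOpen hU₁ one_le_two).continuousAt (hU₁.mem_nhds hx)
    have hfd2 : ContinuousAt (fderiv ℝ (fderiv ℝ φ)) x :=
      ((hφ1.fderiv_of_isOpen hU₁ le_rfl).continuousOn_fderiv_of_isOpen hU₁ le_rfl).continuousAt
        (hU₁.mem_nhds hx)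
    have e1 : ∀ᶠ u in nhds x, φ u ∈ ball (φ x) rψ :=
      hφx.preimage_mem_nhds (ball_mem_nhds _ hrψ)
    have e2 : ∀ᶠ u in nhds x, ‖fderiv ℝ φ u‖ < ‖fderiv ℝ φ x‖ + 1 :=
      hfd1.norm.eventually_lt_const (lt_add_one _)
    have e3 : ∀ᶠ u in nhds x, ‖fderiv ℝ (fderiv ℝ φ) u‖ < ‖fderiv ℝ (fderiv ℝ φ) x‖ + 1 :=
      (hfd2.norm (E := H₁ →L[ℝ] H₁ →L[ℝ] H₁)).eventually_lt_const (lt_add_one _)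
    have e4 : ∀ᶠ u in nhds x, u ∈ U₁ ∩ Wφ := (hU₁.inter hWφo).eventually_mem ⟨hx, hxWφ⟩
    obtain ⟨rφ, hrφ, hball⟩ := Metric.eventually_nhds_iff_ball.1 (e1.and (e2.and (e3.and e4)))
    have hWU : ball x rφ ⊆ U₁ := fun u hu => ((hball u hu).2.2.2).1
    have hWWφ : ball x rφ ⊆ Wφ := fun u hu => ((hball u hu).2.2.2).2
    have hφmem : ∀ u ∈ ball x rφ, φ u ∈ ball (φ x) rψ := fun u hu => (hball u hu).1
    have hC1 : ∀ u ∈ ball x rφ, ‖fderiv ℝ φ u‖ ≤ ‖fderiv ℝ φ x‖ + 1 :=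
      fun u hu => ((hball u hu).2.1).le
    have hC2 : ∀ u ∈ ball x rφ,
        ‖fderiv ℝ (fderiv ℝ φ) u‖ ≤ ‖fderiv ℝ (fderiv ℝ φ) x‖ + 1 :=
      fun u hu => ((hball u hu).2.2.1).le
    obtain ⟨w₀, hw₀⟩ := hι_dense.exists_mem_open isOpen_ball ⟨φ x, mem_ball_self hrψ⟩
    obtain ⟨y₀, hy₀⟩ := hι_dense.exists_mem_open isOpen_ball ⟨x, mem_ball_self hrφ⟩
    obtain ⟨aψ, bψ, haψ, hbψ, hψbd⟩ := tame_local_bounds ι hι_norm hV₁ hψ2 hrψ hballψV hκψ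
      (fun y hy ξ η => hestψ y (hballψ hy) ξ η) hw₀
    obtain ⟨aφ, bφ, haφ, hbφ, hφbd⟩ := tame_local_bounds ι hι_norm hU₁ hφ2 hrφ hWU hκφ
      (fun y hy ξ η => hestφ y (hWWφ hy) ξ η) hy₀
    have hC1pos : (0:ℝ) < ‖fderiv ℝ φ x‖ + 1 := by positivity
    have hC2pos : (0:ℝ) < ‖fderiv ℝ (fderiv ℝ φ) x‖ + 1 := by positivity
    set K1 : ℝ := κψ * ((‖fderiv ℝ φ x‖ + 1) * aφ * 4 + (‖fderiv ℝ φ x‖ + 1) * bφ * 2 + (‖fderiv ℝ φ x‖ + 1) * (‖fderiv ℝ φ x‖ + 1) * (aφ + bφ)) with hK1def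
    set K2 : ℝ := aψ * κφ + (‖fderiv ℝ (fderiv ℝ φ) x‖ + 1) * (aψ + bψ * aφ + bψ * bφ) with hK2def
    have hK1n : 0 ≤ K1 := by
      have := hκψ.le
      have := hC1pos.le
      rw [hK1def]
      nlinarith [mul_nonneg (mul_nonneg hκψ.le hC1pos.le) haφ,
        mul_nonneg (mul_nonneg hκψ.le hC1pos.le) hbφ,
        mul_nonneg (mul_nonneg (mul_nonneg hκψ.le hC1pos.le) hC1pos.le) (add_nonneg haφ hbφ)]
    have hK2n : 0 ≤ K2 := by
      rw [hK2def]
      have h1 : 0 ≤ aψ * κφ := mul_nonneg haψ hκφ.le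
      have h2 : 0 ≤ (‖fderiv ℝ (fderiv ℝ φ) x‖ + 1) * (aψ + bψ * aφ + bψ * bφ) :=
        mul_nonneg hC2pos.le
          (add_nonneg (add_nonneg haψ (mul_nonneg hbψ haφ)) (mul_nonneg hbψ hbφ))
      linarith
    refine ⟨ball x rφ, hWU, isOpen_ball, mem_ball_self hrφ, K1 + K2 + 1, by linarith, ?_⟩
    intro y hyW ξ η
    have hyU : ι y ∈ U₁ := hWU hyW
    have hφιy : φ (ι y) = ι (φ₂ y) := hφc y hyU
    have hφ₂mem : ι (φ₂ y) ∈ ball (φ x) rψ := by rw [← hφιy]; exact hφmem _ hyW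
    rw [second_deriv_comp ι hU₁ hV₁ hφ2 hψ2 hm2 hyU ξ η]
    -- abbreviations
    have hN : ‖ι ξ‖ ≤ ‖ξ‖ := hι_norm ξ
    have hMm : ‖ι η‖ ≤ ‖η‖ := hι_norm η
    have hPnn : (0:ℝ) ≤ ‖ι ξ‖ * ‖η‖ + ‖ξ‖ * ‖ι η‖ + ‖y‖ * ‖ι ξ‖ * ‖ι η‖ := by positivity
    have hP1 : ‖ι ξ‖ * ‖η‖ ≤ ‖ι ξ‖ * ‖η‖ + ‖ξ‖ * ‖ι η‖ + ‖y‖ * ‖ι ξ‖ * ‖ι η‖ := by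
      nlinarith [mul_nonneg (norm_nonneg ξ) (norm_nonneg (ι η)),
        mul_nonneg (mul_nonneg (norm_nonneg y) (norm_nonneg (ι ξ))) (norm_nonneg (ι η))]
    have hP2 : ‖ξ‖ * ‖ι η‖ ≤ ‖ι ξ‖ * ‖η‖ + ‖ξ‖ * ‖ι η‖ + ‖y‖ * ‖ι ξ‖ * ‖ι η‖ := by
      nlinarith [mul_nonneg (norm_nonneg (ι ξ)) (norm_nonneg η),
        mul_nonneg (mul_nonneg (norm_nonneg y) (norm_nonneg (ι ξ))) (norm_nonneg (ι η))]
    have hP3 : ‖ι ξ‖ * ‖ι η‖ ≤ ‖ι ξ‖ * ‖η‖ + ‖ξ‖ * ‖ι η‖ + ‖y‖ * ‖ι ξ‖ * ‖ι η‖ := by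
      nlinarith [mul_le_mul_of_nonneg_left hMm (norm_nonneg (ι ξ)),
        mul_nonneg (norm_nonneg ξ) (norm_nonneg (ι η)),
        mul_nonneg (mul_nonneg (norm_nonneg y) (norm_nonneg (ι ξ))) (norm_nonneg (ι η))]
    have hP4 : ‖y‖ * (‖ι ξ‖ * ‖ι η‖) ≤ ‖ι ξ‖ * ‖η‖ + ‖ξ‖ * ‖ι η‖ + ‖y‖ * ‖ι ξ‖ * ‖ι η‖ := by
      nlinarith [mul_nonneg (norm_nonneg (ι ξ)) (norm_nonneg η),
        mul_nonneg (norm_nonneg ξ) (norm_nonneg (ι η))]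
    -- bounds on first derivatives of φ₂
    have hιξ' : ‖ι (fderiv ℝ φ₂ y ξ)‖ ≤ (‖fderiv ℝ φ x‖ + 1) * ‖ι ξ‖ := by
      rw [fderiv_compat_apply ι hU₁ hφ1 hφc hφ2 hyU ξ]
      calc ‖fderiv ℝ φ (ι y) (ι ξ)‖ ≤ ‖fderiv ℝ φ (ι y)‖ * ‖ι ξ‖ :=
            (fderiv ℝ φ (ι y)).le_opNorm _
        _ ≤ (‖fderiv ℝ φ x‖ + 1) * ‖ι ξ‖ := by
            have := hC1 (ι y) hyW
            exact mul_le_mul_of_nonneg_right this (norm_nonneg _)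
    have hιη' : ‖ι (fderiv ℝ φ₂ y η)‖ ≤ (‖fderiv ℝ φ x‖ + 1) * ‖ι η‖ := by
      rw [fderiv_compat_apply ι hU₁ hφ1 hφc hφ2 hyU η]
      calc ‖fderiv ℝ φ (ι y) (ι η)‖ ≤ ‖fderiv ℝ φ (ι y)‖ * ‖ι η‖ :=
            (fderiv ℝ φ (ι y)).le_opNorm _
        _ ≤ (‖fderiv ℝ φ x‖ + 1) * ‖ι η‖ := by
            have := hC1 (ι y) hyW
            exact mul_le_mul_of_nonneg_right this (norm_nonneg _)
    have hξ' : ‖fderiv ℝ φ₂ y ξ‖ ≤ aφ * ‖ξ‖ + (aφ + bφ * ‖y‖) * ‖ι ξ‖ := (hφbd y hyW).2 ξ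
    have hη' : ‖fderiv ℝ φ₂ y η‖ ≤ aφ * ‖η‖ + (aφ + bφ * ‖y‖) * ‖ι η‖ := (hφbd y hyW).2 η
    have hval : ‖φ₂ y‖ ≤ aφ + bφ * ‖y‖ := (hφbd y hyW).1
    have hvaln : (0:ℝ) ≤ aφ + bφ * ‖y‖ :=
      add_nonneg haφ (mul_nonneg hbφ (norm_nonneg y))
    -- bound on second derivative of φ₂ in the H₁ norm
    have hιF2 : ‖ι (fderiv ℝ (fderiv ℝ φ₂) y ξ η)‖ ≤ (‖fderiv ℝ (fderiv ℝ φ) x‖ + 1) * (‖ι ξ‖ * ‖ι η‖) := by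
      rw [fderiv2_compat ι hU₁ hφ1 hφc hφ2 hyU ξ η]
      calc ‖fderiv ℝ (fderiv ℝ φ) (ι y) (ι ξ) (ι η)‖
          ≤ ‖fderiv ℝ (fderiv ℝ φ) (ι y) (ι ξ)‖ * ‖ι η‖ :=
            (fderiv ℝ (fderiv ℝ φ) (ι y) (ι ξ)).le_opNorm _
        _ ≤ (‖fderiv ℝ (fderiv ℝ φ) (ι y)‖ * ‖ι ξ‖) * ‖ι η‖ := by
            gcongr
            exact (fderiv ℝ (fderiv ℝ φ) (ι y)).le_opNorm _
        _ ≤ ((‖fderiv ℝ (fderiv ℝ φ) x‖ + 1) * ‖ι ξ‖) * ‖ι η‖ := by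
            gcongr
            exact hC2 (ι y) hyW
        _ = (‖fderiv ℝ (fderiv ℝ φ) x‖ + 1) * (‖ι ξ‖ * ‖ι η‖) := by ring
    -- term T1
    have hT1 : ‖fderiv ℝ (fderiv ℝ ψ₂) (φ₂ y) (fderiv ℝ φ₂ y ξ) (fderiv ℝ φ₂ y η)‖ ≤
        K1 * (‖ι ξ‖ * ‖η‖ + ‖ξ‖ * ‖ι η‖ + ‖y‖ * ‖ι ξ‖ * ‖ι η‖) := by
      calc ‖fderiv ℝ (fderiv ℝ ψ₂) (φ₂ y) (fderiv ℝ φ₂ y ξ) (fderiv ℝ φ₂ y η)‖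
          ≤ κψ * (‖ι (fderiv ℝ φ₂ y ξ)‖ * ‖fderiv ℝ φ₂ y η‖ +
              ‖fderiv ℝ φ₂ y ξ‖ * ‖ι (fderiv ℝ φ₂ y η)‖ +
              ‖φ₂ y‖ * ‖ι (fderiv ℝ φ₂ y ξ)‖ * ‖ι (fderiv ℝ φ₂ y η)‖) :=
            hestψ (φ₂ y) (hballψ hφ₂mem) _ _
        _ ≤ κψ * (((‖fderiv ℝ φ x‖ + 1) * ‖ι ξ‖) * (aφ * ‖η‖ + (aφ + bφ * ‖y‖) * ‖ι η‖) +
              (aφ * ‖ξ‖ + (aφ + bφ * ‖y‖) * ‖ι ξ‖) * ((‖fderiv ℝ φ x‖ + 1) * ‖ι η‖) +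
              (aφ + bφ * ‖y‖) * ((‖fderiv ℝ φ x‖ + 1) * ‖ι ξ‖) * ((‖fderiv ℝ φ x‖ + 1) * ‖ι η‖)) := by
            gcongr
        _ ≤ K1 * (‖ι ξ‖ * ‖η‖ + ‖ξ‖ * ‖ι η‖ + ‖y‖ * ‖ι ξ‖ * ‖ι η‖) := by
            rw [hK1def]
            linarith [mul_le_mul_of_nonneg_left hP1
                (mul_nonneg (mul_nonneg hκψ.le hC1pos.le) haφ),
              mul_le_mul_of_nonneg_left hP2
                (mul_nonneg (mul_nonneg hκψ.le hC1pos.le) haφ),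
              mul_le_mul_of_nonneg_left hP3
                (mul_nonneg hκψ.le (add_nonneg
                  (mul_nonneg (mul_nonneg hC1pos.le haφ) (by norm_num : (0:ℝ) ≤ 2))
                  (mul_nonneg (mul_nonneg hC1pos.le hC1pos.le) haφ))),
              mul_le_mul_of_nonneg_left hP4
                (mul_nonneg hκψ.le (add_nonneg
                  (mul_nonneg (mul_nonneg hC1pos.le hbφ) (by norm_num : (0:ℝ) ≤ 2))
                  (mul_nonneg (mul_nonneg hC1pos.le hC1pos.le) hbφ)))]
    -- term T2
    have hT2 : ‖fderiv ℝ ψ₂ (φ₂ y) (fderiv ℝ (fderiv ℝ φ₂) y ξ η)‖ ≤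
        K2 * (‖ι ξ‖ * ‖η‖ + ‖ξ‖ * ‖ι η‖ + ‖y‖ * ‖ι ξ‖ * ‖ι η‖) := by
      have hF2 : ‖fderiv ℝ (fderiv ℝ φ₂) y ξ η‖ ≤
          κφ * (‖ι ξ‖ * ‖η‖ + ‖ξ‖ * ‖ι η‖ + ‖y‖ * ‖ι ξ‖ * ‖ι η‖) :=
        hestφ y (hWWφ hyW) ξ η
      have hcoef : aψ + bψ * ‖φ₂ y‖ ≤ aψ + bψ * (aφ + bφ * ‖y‖) := by
        have := mul_le_mul_of_nonneg_left hval hbψ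
        linarith
      calc ‖fderiv ℝ ψ₂ (φ₂ y) (fderiv ℝ (fderiv ℝ φ₂) y ξ η)‖
          ≤ aψ * ‖fderiv ℝ (fderiv ℝ φ₂) y ξ η‖ +
            (aψ + bψ * ‖φ₂ y‖) * ‖ι (fderiv ℝ (fderiv ℝ φ₂) y ξ η)‖ :=
            (hψbd (φ₂ y) hφ₂mem).2 _
        _ ≤ aψ * (κφ * (‖ι ξ‖ * ‖η‖ + ‖ξ‖ * ‖ι η‖ + ‖y‖ * ‖ι ξ‖ * ‖ι η‖)) +
            (aψ + bψ * (aφ + bφ * ‖y‖)) * ((‖fderiv ℝ (fderiv ℝ φ) x‖ + 1) * (‖ι ξ‖ * ‖ι η‖)) := by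
            have h2 := mul_le_mul hcoef hιF2 (norm_nonneg _)
              (add_nonneg haψ (mul_nonneg hbψ hvaln))
            have h1 := mul_le_mul_of_nonneg_left hF2 haψ
            linarith
        _ ≤ K2 * (‖ι ξ‖ * ‖η‖ + ‖ξ‖ * ‖ι η‖ + ‖y‖ * ‖ι ξ‖ * ‖ι η‖) := by
            rw [hK2def]
            linarith [mul_le_mul_of_nonneg_left hP3
                (mul_nonneg hC2pos.le (add_nonneg haψ (mul_nonneg hbψ haφ))),
              mul_le_mul_of_nonneg_left hP4
                (mul_nonneg hC2pos.le (mul_nonneg hbψ hbφ))]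
    calc ‖fderiv ℝ (fderiv ℝ ψ₂) (φ₂ y) (fderiv ℝ φ₂ y ξ) (fderiv ℝ φ₂ y η) +
          fderiv ℝ ψ₂ (φ₂ y) (fderiv ℝ (fderiv ℝ φ₂) y ξ η)‖
        ≤ ‖fderiv ℝ (fderiv ℝ ψ₂) (φ₂ y) (fderiv ℝ φ₂ y ξ) (fderiv ℝ φ₂ y η)‖ +
          ‖fderiv ℝ ψ₂ (φ₂ y) (fderiv ℝ (fderiv ℝ φ₂) y ξ η)‖ := norm_add_le _ _
      _ ≤ (K1 + K2) * (‖ι ξ‖ * ‖η‖ + ‖ξ‖ * ‖ι η‖ + ‖y‖ * ‖ι ξ‖ * ‖ι η‖) := by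
          rw [add_mul]; exact add_le_add hT1 hT2
      _ ≤ (K1 + K2 + 1) * (‖ι ξ‖ * ‖η‖ + ‖ξ‖ * ‖ι η‖ + ‖y‖ * ‖ι ξ‖ * ‖ι η‖) := by
          have := hPnn
          nlinarith
end

section
/- Suppose φ : U₁ → H₁ is (H₁,H₂)-tame. Then for every x ∈ U₁ there exist an H₁-open neighborhood W′ ⊆ U₁ of x and a constant κ₁ > 0 such that for every y ∈ W′ ∩ H₂ and every η ∈ H₂ one has the estimate |d(φ|_{U₂})|_y η|₂ ≤ κ₁(|η|₂ + |y|₂|η|₁). -/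
open Metric Set

set_option maxHeartbeats 1000000 in
/-- **First–derivative tameness estimate** (Lemma `le:tame-1`). -/
theorem tame_first_derivative_estimate {H₁ H₂ : Type*}
    [NormedAddCommGroup H₁] [InnerProductSpace ℝ H₁] [CompleteSpace H₁]
    [NormedAddCommGroup H₂] [InnerProductSpace ℝ H₂] [CompleteSpace H₂]
    (ι : H₂ →L[ℝ] H₁) (hι_inj : Function.Injective ι)
    (hι_dense : DenseRange ι) (hι_norm : ∀ x : H₂, ‖ι x‖ ≤ ‖x‖)
    {U₁ : Set H₁} (hU₁ : IsOpen U₁)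
    {φ : H₁ → H₁} {φ₂ : H₂ → H₂} (hφ : IsTame ι U₁ φ φ₂) :
    ∀ x ∈ U₁, ∃ W' : Set H₁, W' ⊆ U₁ ∧ IsOpen W' ∧ x ∈ W' ∧ ∃ κ₁ : ℝ, 0 < κ₁ ∧
      ∀ y : H₂, ι y ∈ W' → ∀ η : H₂,
        ‖fderiv ℝ φ₂ y η‖ ≤ κ₁ * (‖η‖ + ‖y‖ * ‖ι η‖) := by
  intro x hx
  obtain ⟨hφ₁, hφeq, hφ₂, htame⟩ := hφ
  obtain ⟨W, hWU, hWopen, hxW, κ, hκ, hbound⟩ := htame x hx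
  -- pick r > 0 with ball x (2r) ⊆ W
  obtain ⟨ε, hε, hball⟩ := Metric.isOpen_iff.1 hWopen x hxW
  set r : ℝ := ε / 2 with hr
  have hr0 : 0 < r := by positivity
  have hball' : Metric.ball x r ⊆ W := by
    apply subset_trans _ hball
    apply Metric.ball_subset_ball
    rw [hr]; linarith
  -- pick y₀ ∈ H₂ with ι y₀ ∈ ball x r
  obtain ⟨y₀, hy₀⟩ : ∃ y₀ : H₂, ι y₀ ∈ Metric.ball x r := by
    have := hι_dense.exists_dist_lt x hr0
    obtain ⟨y₀, h⟩ := this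
    exact ⟨y₀, by simpa [Metric.mem_ball, dist_comm] using h⟩
  -- the open set on which φ₂ is C²
  set V : Set H₂ := ι ⁻¹' U₁ with hV
  have hVopen : IsOpen V := hU₁.preimage ι.continuous
  set F : H₂ → (H₂ →L[ℝ] H₂) := fun z => fderiv ℝ φ₂ z with hF
  have hFdiff : DifferentiableOn ℝ F V := by
    have : ContDiffOn ℝ 1 F V := hφ₂.fderiv_of_isOpen hVopen (by norm_num)
    exact this.differentiableOn one_ne_zero
  have hFat : ∀ z ∈ V, HasFDerivAt F (fderiv ℝ F z) z := fun z hz =>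
    (hFdiff.differentiableAt (hVopen.mem_nhds hz)).hasFDerivAt
  refine ⟨Metric.ball x r, fun z hz => hWU (hball' hz), Metric.isOpen_ball, Metric.mem_ball_self hr0, ?_⟩
  set B : ℝ := ‖F y₀‖ with hB
  set a : ℝ := ‖y₀‖ with ha
  refine ⟨B + 2*κ*r + κ*a + 4*κ*r*a + κ + 2*κ*r + 1, by positivity, ?_⟩
  intro y hy η
  -- the segment from y₀ to y maps into ball x r ⊆ W ⊆ U₁
  have hseg : ∀ t ∈ Icc (0:ℝ) 1, ι (y₀ + t • (y - y₀)) ∈ Metric.ball x r := by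
    intro t ht
    have : ι (y₀ + t • (y - y₀)) = (1 - t) • ι y₀ + t • ι y := by
      simp only [map_add, map_smul, map_sub]
      module
    rw [this]
    exact (convex_ball x r) hy₀ hy (by linarith [ht.1, ht.2]) (by linarith [ht.1]) (by ring_nf)
  have hsegV : ∀ t ∈ Icc (0:ℝ) 1, (y₀ + t • (y - y₀)) ∈ V := fun t ht =>
    hWU (hball' (hseg t ht))
  -- mean value estimate for g z := F z η along the segment
  set g : H₂ → H₂ := fun z => F z η with hg
  set c : ℝ → H₂ := fun t => y₀ + t • (y - y₀) with hc
  have hcderiv : ∀ t : ℝ, HasDerivAt c (y - y₀) t := by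
    intro t
    have : HasDerivAt (fun t : ℝ => t • (y - y₀)) ((1:ℝ) • (y - y₀)) t :=
      (hasDerivAt_id t).smul_const (y - y₀)
    exact (by simpa using this : HasDerivAt (fun t : ℝ => t • (y - y₀)) (y - y₀) t).const_add y₀
  have hgderiv : ∀ t ∈ Icc (0:ℝ) 1,
      HasDerivAt (g ∘ c) (fderiv ℝ F (c t) (y - y₀) η) t := by
    intro t ht
    have h1 : HasFDerivAt g ((ContinuousLinearMap.apply ℝ H₂ η).comp (fderiv ℝ F (c t)))
        (c t) := by
      exact (ContinuousLinearMap.apply ℝ H₂ η).hasFDerivAt.comp (c t) (hFat _ (hsegV t ht))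
    simpa using h1.comp_hasDerivAt t (hcderiv t)
  set C : ℝ := κ * (‖ι (y - y₀)‖ * ‖η‖ + ‖y - y₀‖ * ‖ι η‖ +
      (a + ‖y - y₀‖) * ‖ι (y - y₀)‖ * ‖ι η‖) with hC
  have hCb : ∀ t ∈ Ico (0:ℝ) 1, ‖fderiv ℝ F (c t) (y - y₀) η‖ ≤ C := by
    intro t ht
    have htIcc : t ∈ Icc (0:ℝ) 1 := ⟨ht.1, le_of_lt ht.2⟩
    have h1 := hbound (c t) (hball' (hseg t htIcc)) (y - y₀) η
    have hct : ‖c t‖ ≤ a + ‖y - y₀‖ := by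
      calc ‖c t‖ ≤ ‖y₀‖ + ‖t • (y - y₀)‖ := norm_add_le _ _
        _ ≤ a + ‖y - y₀‖ := by
            rw [norm_smul]
            have : |t| ≤ 1 := by rw [abs_le]; constructor <;> linarith [ht.1, ht.2]
            have := mul_le_of_le_one_left (norm_nonneg (y - y₀)) this
            simp only [ha, Real.norm_eq_abs] at *
            linarith
    refine le_trans h1 ?_
    rw [hC]
    have h2 : ‖c t‖ * ‖ι (y - y₀)‖ * ‖ι η‖ ≤ (a + ‖y - y₀‖) * ‖ι (y - y₀)‖ * ‖ι η‖ := by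
      apply mul_le_mul_of_nonneg_right _ (norm_nonneg _)
      exact mul_le_mul_of_nonneg_right hct (norm_nonneg _)
    nlinarith [norm_nonneg (ι (y - y₀)), norm_nonneg η, norm_nonneg (ι η)]
  have hMVT := norm_image_sub_le_of_norm_deriv_le_segment'
      (f := g ∘ c) (f' := fun t => fderiv ℝ F (c t) (y - y₀) η) (a := 0) (b := 1)
      (fun t ht => (hgderiv t ht).hasDerivWithinAt) hCb 1 (by norm_num)
  have hgc : (g ∘ c) 1 = F y η ∧ (g ∘ c) 0 = F y₀ η := by
    constructor <;> simp [hg, hc, hF]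
  rw [hgc.1, hgc.2] at hMVT
  -- assemble the final estimate
  have h1 : ‖F y η‖ ≤ ‖F y₀ η‖ + C * (1 - 0) := by
    have := norm_sub_norm_le (F y η) (F y₀ η)
    linarith [hMVT]
  have h2 : ‖F y₀ η‖ ≤ B * ‖η‖ := (F y₀).le_opNorm η
  -- bound the pieces of C
  have hι1 : ‖ι (y - y₀)‖ ≤ 2 * r := by
    have hy' : dist (ι y) x < r := hy
    have hy₀' : dist (ι y₀) x < r := hy₀
    have htri : dist (ι y) (ι y₀) ≤ dist (ι y) x + dist x (ι y₀) := dist_triangle _ _ _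
    rw [map_sub, ← dist_eq_norm]
    rw [dist_comm x (ι y₀)] at htri
    linarith
  have hιη : ‖ι η‖ ≤ ‖η‖ := hι_norm η
  have hyy₀ : ‖y - y₀‖ ≤ ‖y‖ + a := by
    have := norm_sub_le y y₀; simpa [ha] using this
  -- final arithmetic
  have ha0 : (0:ℝ) ≤ a := ha ▸ norm_nonneg y₀
  have hB0 : (0:ℝ) ≤ B := hB ▸ norm_nonneg (F y₀)
  have hCle : C ≤ (2*κ*r + κ*a + 4*κ*r*a) * ‖η‖ + (κ + 2*κ*r) * (‖y‖ * ‖ι η‖) := by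
    rw [hC]
    have e1 : κ * (‖ι (y - y₀)‖ * ‖η‖) ≤ κ * (2*r) * ‖η‖ := by
      rw [mul_assoc]
      exact mul_le_mul_of_nonneg_left (mul_le_mul_of_nonneg_right hι1 (norm_nonneg _)) hκ.le
    have e2 : κ * (‖y - y₀‖ * ‖ι η‖) ≤ κ * ((‖y‖ + a) * ‖ι η‖) :=
      mul_le_mul_of_nonneg_left (mul_le_mul_of_nonneg_right hyy₀ (norm_nonneg _)) hκ.le
    have e3 : κ * ((a + ‖y - y₀‖) * ‖ι (y - y₀)‖ * ‖ι η‖) ≤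
        κ * ((a + (‖y‖ + a)) * (2*r) * ‖ι η‖) := by
      apply mul_le_mul_of_nonneg_left _ hκ.le
      apply mul_le_mul_of_nonneg_right _ (norm_nonneg _)
      apply mul_le_mul (by linarith) hι1 (norm_nonneg _)
      linarith [norm_nonneg y]
    have haη : κ * a * ‖ι η‖ ≤ κ * a * ‖η‖ :=
      mul_le_mul_of_nonneg_left hιη (mul_nonneg hκ.le ha0)
    have h4 : 4 * (κ * r * a) * ‖ι η‖ ≤ 4 * (κ * r * a) * ‖η‖ := by
      apply mul_le_mul_of_nonneg_left hιη
      have := mul_nonneg (mul_nonneg hκ.le hr0.le) ha0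
      linarith
    nlinarith [e1, e2, e3, haη, h4]
  have hκsum : B + (2*κ*r + κ*a + 4*κ*r*a) ≤
      B + 2*κ*r + κ*a + 4*κ*r*a + κ + 2*κ*r + 1 := by
    nlinarith [mul_nonneg hκ.le hr0.le]
  have hκ₁η : (κ + 2*κ*r) * (‖y‖ * ‖ι η‖) ≤
      (B + 2*κ*r + κ*a + 4*κ*r*a + κ + 2*κ*r + 1) * (‖y‖ * ‖ι η‖) := by
    apply mul_le_mul_of_nonneg_right _ (mul_nonneg (norm_nonneg _) (norm_nonneg _))
    nlinarith [mul_nonneg hκ.le hr0.le, mul_nonneg hκ.le ha0,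
      mul_nonneg (mul_nonneg hκ.le hr0.le) ha0]
  have hκ₁η' : B * ‖η‖ + (2*κ*r + κ*a + 4*κ*r*a) * ‖η‖ ≤
      (B + 2*κ*r + κ*a + 4*κ*r*a + κ + 2*κ*r + 1) * ‖η‖ := by
    calc B * ‖η‖ + (2*κ*r + κ*a + 4*κ*r*a) * ‖η‖
        = (B + (2*κ*r + κ*a + 4*κ*r*a)) * ‖η‖ := by ring
      _ ≤ (B + 2*κ*r + κ*a + 4*κ*r*a + κ + 2*κ*r + 1) * ‖η‖ :=
          mul_le_mul_of_nonneg_right hκsum (norm_nonneg _)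
  calc ‖fderiv ℝ φ₂ y η‖ = ‖F y η‖ := rfl
    _ ≤ B * ‖η‖ + C := by linarith
    _ ≤ (B + 2*κ*r + κ*a + 4*κ*r*a + κ + 2*κ*r + 1) * (‖η‖ + ‖y‖ * ‖ι η‖) := by
        rw [mul_add]
        linarith [hCle, hκ₁η, hκ₁η']
end

section
/- Suppose φ : U₁ → H₁ is (H₁,H₂)-tame. Then for every x ∈ U₁ there exist an H₁-open neighborhood W″ ⊆ U₁ of x and a constant κ₀ > 0 such that for every y ∈ W″ ∩ H₂ one has the estimate |φ(y)|₂ ≤ κ₀(1 + |y|₂). -/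
open Metric Set

set_option maxHeartbeats 1000000 in
/-- **Zeroth–order tameness estimate** (Lemma `le:tame-0`). -/
theorem tame_zeroth_order_estimate {H₁ H₂ : Type*}
    [NormedAddCommGroup H₁] [InnerProductSpace ℝ H₁] [CompleteSpace H₁]
    [NormedAddCommGroup H₂] [InnerProductSpace ℝ H₂] [CompleteSpace H₂]
    (ι : H₂ →L[ℝ] H₁) (hι_inj : Function.Injective ι)
    (hι_dense : DenseRange ι) (hι_norm : ∀ x : H₂, ‖ι x‖ ≤ ‖x‖)
    {U₁ : Set H₁} (hU₁ : IsOpen U₁)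
    {φ : H₁ → H₁} {φ₂ : H₂ → H₂} (hφ : IsTame ι U₁ φ φ₂) :
    ∀ x ∈ U₁, ∃ W'' : Set H₁, W'' ⊆ U₁ ∧ IsOpen W'' ∧ x ∈ W'' ∧ ∃ κ₀ : ℝ, 0 < κ₀ ∧
      ∀ y : H₂, ι y ∈ W'' → ‖φ₂ y‖ ≤ κ₀ * (1 + ‖y‖) := by
  intro x hx
  obtain ⟨hφ₁, hcomm, hφ₂, htame⟩ := hφ
  obtain ⟨W, hWU, hWopen, hxW, κ, hκ, hbound⟩ := htame x hx
  obtain ⟨r, hr, hball⟩ := Metric.isOpen_iff.1 hWopen x hxW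
  obtain ⟨y₀, hy₀⟩ : ∃ y₀ : H₂, ι y₀ ∈ ball x r :=
    hι_dense.exists_mem_open isOpen_ball ⟨x, mem_ball_self hr⟩
  refine ⟨ball x r, fun z hz => hWU (hball hz), isOpen_ball, mem_ball_self hr, ?_⟩
  set D := fderiv ℝ φ₂ with hDdef
  have hopen₂ : IsOpen (ι ⁻¹' U₁) := hU₁.preimage ι.continuous
  have hD : ContDiffOn ℝ 1 D (ι ⁻¹' U₁) := hφ₂.fderiv_of_isOpen hopen₂ (by norm_num)
  have hDdiff : DifferentiableOn ℝ D (ι ⁻¹' U₁) := hD.differentiableOn one_ne_zero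
  have hφ₂diff : DifferentiableOn ℝ φ₂ (ι ⁻¹' U₁) := hφ₂.differentiableOn (by norm_num)
  set C₁ := ‖φ₂ y₀‖ with hC₁def
  set C₂ := ‖D y₀‖ + κ * (4 * r + 4 * r ^ 2) with hC₂def
  have hC₂ : 0 ≤ C₂ := by positivity
  refine ⟨C₁ + 2 * C₂ * ‖y₀‖ + C₂ + 1, by positivity, ?_⟩
  intro y hy
  set ξ := y - y₀ with hξdef
  set c : ℝ → H₂ := fun t => y₀ + t • ξ with hcdef
  have hc0 : c 0 = y₀ := by simp [hcdef]
  have hc1 : c 1 = y := by simp [hcdef, hξdef]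
  have hmemball : ∀ t ∈ Icc (0:ℝ) 1, ι (c t) ∈ ball x r := by
    intro t ht
    have h1 : ι (c t) = ι y₀ + t • (ι y - ι y₀) := by
      simp [hcdef, hξdef, map_add, map_smul, map_sub]
    rw [h1]
    exact (convex_ball x r).add_smul_sub_mem hy₀ hy ht
  have hmemU : ∀ t ∈ Icc (0:ℝ) 1, c t ∈ ι ⁻¹' U₁ := fun t ht =>
    hWU (hball (hmemball t ht))
  have hιξ : ‖ι ξ‖ ≤ 2 * r := by
    have h1 : ι ξ = ι y - ι y₀ := by simp [hξdef]
    have h2 : dist (ι y) (ι y₀) ≤ dist (ι y) x + dist x (ι y₀) := dist_triangle _ _ _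
    have h3 : dist (ι y) x < r := mem_ball.1 hy
    have h4 : dist x (ι y₀) < r := by rw [dist_comm]; exact mem_ball.1 hy₀
    rw [h1, ← dist_eq_norm]
    linarith
  -- derivative of the path
  have hcderiv : ∀ t : ℝ, HasDerivAt c ξ t := by
    intro t
    have h1 : HasDerivAt (fun s : ℝ => s • ξ) ((1:ℝ) • ξ) t := (hasDerivAt_id t).smul_const ξ
    simpa [hcdef] using h1.const_add y₀
  -- derivative of t ↦ D (c t) ξ
  have hDat : ∀ t ∈ Icc (0:ℝ) 1,
      HasDerivAt (fun s => D (c s) ξ) ((fderiv ℝ D (c t)) ξ ξ) t := by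
    intro t ht
    have hdiff : DifferentiableAt ℝ D (c t) :=
      hDdiff.differentiableAt (hopen₂.mem_nhds (hmemU t ht))
    have h1 : HasDerivAt (fun s => D (c s)) ((fderiv ℝ D (c t)) ξ) t :=
      hdiff.hasFDerivAt.comp_hasDerivAt t (hcderiv t)
    have h2 := h1.clm_apply (hasDerivAt_const t ξ)
    simpa using h2
  set M := κ * (2 * r * ‖ξ‖ + ‖ξ‖ * (2 * r) + (‖y₀‖ + ‖ξ‖) * (2 * r) * (2 * r)) with hMdef
  have hbnd : ∀ t ∈ Icc (0:ℝ) 1, ‖(fderiv ℝ D (c t)) ξ ξ‖ ≤ M := by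
    intro t ht
    have h1 := hbound (c t) (hball (hmemball t ht)) ξ ξ
    have hct : ‖c t‖ ≤ ‖y₀‖ + ‖ξ‖ := by
      have h2 : ‖t • ξ‖ ≤ ‖ξ‖ := by
        rw [norm_smul, Real.norm_eq_abs]
        have : |t| ≤ 1 := abs_le.2 ⟨by linarith [ht.1], ht.2⟩
        nlinarith [norm_nonneg ξ]
      calc ‖c t‖ ≤ ‖y₀‖ + ‖t • ξ‖ := norm_add_le _ _
        _ ≤ ‖y₀‖ + ‖ξ‖ := by linarith
    refine h1.trans ?_
    rw [hMdef]
    gcongr <;> first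
      | exact hιξ
      | exact hct
  -- first mean value: ‖D (c t) ξ - D y₀ ξ‖ ≤ M * t
  have hmv1 : ∀ t ∈ Icc (0:ℝ) 1, ‖D (c t) ξ - D (c 0) ξ‖ ≤ M * (t - 0) :=
    norm_image_sub_le_of_norm_deriv_le_segment'
      (fun t ht => (hDat t ht).hasDerivWithinAt)
      (fun t ht => hbnd t (Ico_subset_Icc_self ht))
  -- derivative of t ↦ φ₂ (c t)
  have hgat : ∀ t ∈ Icc (0:ℝ) 1, HasDerivAt (fun s => φ₂ (c s)) (D (c t) ξ) t := by
    intro t ht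
    have hdiff : DifferentiableAt ℝ φ₂ (c t) :=
      hφ₂diff.differentiableAt (hopen₂.mem_nhds (hmemU t ht))
    exact hdiff.hasFDerivAt.comp_hasDerivAt t (hcderiv t)
  have hbnd2 : ∀ t ∈ Icc (0:ℝ) 1, ‖D (c t) ξ‖ ≤ ‖D y₀‖ * ‖ξ‖ + M := by
    intro t ht
    have h1 := hmv1 t ht
    have h2 : ‖D (c 0) ξ‖ ≤ ‖D y₀‖ * ‖ξ‖ := by
      rw [hc0]; exact (D y₀).le_opNorm ξ
    have h3 : ‖D (c t) ξ‖ ≤ ‖D (c 0) ξ‖ + ‖D (c t) ξ - D (c 0) ξ‖ := by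
      have := norm_add_le (D (c 0) ξ) (D (c t) ξ - D (c 0) ξ)
      simpa using this
    have hM : 0 ≤ M := by positivity
    nlinarith [ht.1, ht.2]
  have hmv2 : ‖φ₂ (c 1) - φ₂ (c 0)‖ ≤ (‖D y₀‖ * ‖ξ‖ + M) * (1 - 0) :=
    norm_image_sub_le_of_norm_deriv_le_segment'
      (fun t ht => (hgat t ht).hasDerivWithinAt)
      (fun t ht => hbnd2 t (Ico_subset_Icc_self ht)) 1 (right_mem_Icc.2 zero_le_one)
  rw [hc0, hc1] at hmv2
  have hfin : ‖φ₂ y‖ ≤ C₁ + ‖D y₀‖ * ‖ξ‖ + M := by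
    have := norm_sub_le (φ₂ y) (φ₂ y₀)
    have h1 : ‖φ₂ y‖ ≤ ‖φ₂ y₀‖ + ‖φ₂ y - φ₂ y₀‖ := by
      have := norm_add_le (φ₂ y₀) (φ₂ y - φ₂ y₀)
      simpa using this
    rw [hC₁def]
    linarith [hmv2]
  have hs : ‖ξ‖ ≤ ‖y‖ + ‖y₀‖ := by
    rw [hξdef]; exact norm_sub_le y y₀
  have hC₁nonneg : (0:ℝ) ≤ C₁ := norm_nonneg _
  have hfin2 : ‖φ₂ y‖ ≤ C₁ + C₂ * ‖ξ‖ + C₂ * ‖y₀‖ := by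
    rw [hMdef] at hfin
    rw [hC₂def]
    nlinarith [hfin, norm_nonneg ξ, norm_nonneg y₀, norm_nonneg (D y₀), hκ.le, hr.le,
      mul_nonneg (norm_nonneg (D y₀)) (norm_nonneg y₀),
      mul_nonneg (mul_nonneg hκ.le hr.le) (norm_nonneg y₀),
      mul_nonneg hκ.le (mul_nonneg (mul_nonneg hr.le hr.le) (norm_nonneg y₀))]
  nlinarith [hfin2, mul_le_mul_of_nonneg_left hs hC₂, norm_nonneg y, hC₂, hC₁nonneg,
    mul_nonneg hC₁nonneg (norm_nonneg y),
    mul_nonneg (mul_nonneg hC₂ (norm_nonneg y₀)) (norm_nonneg y),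
    mul_nonneg hC₂ (norm_nonneg y)]
end

section
/- Suppose φ : U₁ → H₁ is (H₁,H₂)-tame. Then for every x ∈ U₁ there exist an H₁-open neighborhood W ⊆ U₁ of x and a single constant κ > 0 such that for every y ∈ W ∩ H₂ and all ξ, η ∈ H₂ the following three estimates hold simultaneously: |φ(y)|₂ ≤ κ(1 + |y|₂); |d(φ|_{U₂})|_y η|₂ ≤ κ(|η|₂ + |y|₂|η|₁); and |d²(φ|_{U₂})|_y(ξ,η)|₂ ≤ κ(|ξ|₁|η|₂ + |ξ|₂|η|₁ + |y|₂|ξ|₁|η|₁). -/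
open Metric Set

/-- Arithmetic helper for the first-order estimate. -/
lemma tame_arith1 {r b y η e A B C : ℝ} (hr : 0 < r) (hb : 0 ≤ b) (hy : 0 ≤ y)
    (hη : 0 ≤ η) (he : 0 ≤ e) (hee : e ≤ η) (hA : 0 ≤ A) (hB : 0 ≤ B) (hC : 0 ≤ C)
    (hA' : A ≤ 2 * r) (hB' : B ≤ y + b) (hC' : C ≤ y + 2 * b) :
    A * η + B * e + C * A * e ≤ (1 + 4 * r + b + 4 * r * b) * (η + y * e) := by
  nlinarith [mul_le_mul_of_nonneg_right (mul_le_mul hC' hA' hA (by linarith)) he,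
    mul_le_mul_of_nonneg_right hA' hη, mul_le_mul_of_nonneg_right hB' he,
    mul_nonneg hb (by linarith : (0:ℝ) ≤ η - e),
    mul_nonneg (mul_nonneg hr.le hb) (by linarith : (0:ℝ) ≤ η - e),
    mul_nonneg (mul_nonneg hr.le hy) he,
    mul_nonneg (mul_nonneg hb hy) he,
    mul_nonneg (mul_nonneg (mul_nonneg hr.le hb) hy) he,
    mul_nonneg hr.le hη]

/-- Arithmetic helper for the zeroth-order estimate. -/
lemma tame_arith2 {r b y A B C : ℝ} (hr : 0 < r) (hb : 0 ≤ b) (hy : 0 ≤ y)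
    (hA : 0 ≤ A) (hB : 0 ≤ B) (hC : 0 ≤ C)
    (hA' : A ≤ 2 * r) (hB' : B ≤ y + b) (hC' : C ≤ y + 2 * b) :
    B + C * A ≤ (1 + 4 * r) * (1 + 2 * b) * (1 + y) := by
  nlinarith [mul_le_mul hC' hA' hA (by linarith),
    mul_nonneg hr.le hy, mul_nonneg hb hy, mul_nonneg (mul_nonneg hr.le hb) hy,
    mul_nonneg hr.le hb]

/-- **Combined tameness estimates** (Corollary `cor:tame`): near every point of
`U₁` the zeroth, first and second order tameness estimates hold with a single
constant `κ`. -/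
theorem tame_combined_estimates {H₁ H₂ : Type*}
    [NormedAddCommGroup H₁] [InnerProductSpace ℝ H₁] [CompleteSpace H₁]
    [NormedAddCommGroup H₂] [InnerProductSpace ℝ H₂] [CompleteSpace H₂]
    (ι : H₂ →L[ℝ] H₁) (hι_inj : Function.Injective ι)
    (hι_dense : DenseRange ι) (hι_norm : ∀ x : H₂, ‖ι x‖ ≤ ‖x‖)
    {U₁ : Set H₁} (hU₁ : IsOpen U₁)
    {φ : H₁ → H₁} {φ₂ : H₂ → H₂} (hφ : IsTame ι U₁ φ φ₂) :
    ∀ x ∈ U₁, ∃ W : Set H₁, W ⊆ U₁ ∧ IsOpen W ∧ x ∈ W ∧ ∃ κ : ℝ, 0 < κ ∧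
      ∀ y : H₂, ι y ∈ W → ∀ ξ η : H₂,
        ‖φ₂ y‖ ≤ κ * (1 + ‖y‖) ∧
        ‖fderiv ℝ φ₂ y η‖ ≤ κ * (‖η‖ + ‖y‖ * ‖ι η‖) ∧
        ‖fderiv ℝ (fderiv ℝ φ₂) y ξ η‖ ≤
          κ * (‖ι ξ‖ * ‖η‖ + ‖ξ‖ * ‖ι η‖ + ‖y‖ * ‖ι ξ‖ * ‖ι η‖) := by
  obtain ⟨-, -, hφ₂, htame⟩ := hφ
  intro x hx
  obtain ⟨W₀, hW₀U, hW₀o, hxW₀, κ₀, hκ₀, hest⟩ := htame x hx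
  obtain ⟨r, hr, hball⟩ := Metric.isOpen_iff.1 hW₀o x hxW₀
  obtain ⟨y₀, hy₀⟩ := hι_dense.exists_dist_lt x hr
  have hy₀ball : ι y₀ ∈ ball x r := by rwa [mem_ball, dist_comm]
  -- open set in `H₂`
  have hVo : IsOpen (ι ⁻¹' U₁) := hU₁.preimage ι.continuous
  have hsubV : ∀ z : H₂, ι z ∈ ball x r → z ∈ ι ⁻¹' U₁ := fun z hz =>
    hW₀U (hball hz)
  -- differentiability of `φ₂` and of its derivative at points of the ball
  have hC2 : ∀ z : H₂, z ∈ ι ⁻¹' U₁ → ContDiffAt ℝ 2 φ₂ z := fun z hz =>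
    hφ₂.contDiffAt (hVo.mem_nhds hz)
  have hD1 : ∀ z : H₂, z ∈ ι ⁻¹' U₁ → HasFDerivAt φ₂ (fderiv ℝ φ₂ z) z := fun z hz =>
    ((hC2 z hz).differentiableAt (by norm_num)).hasFDerivAt
  have hD2 : ∀ z : H₂, z ∈ ι ⁻¹' U₁ →
      HasFDerivAt (fderiv ℝ φ₂) (fderiv ℝ (fderiv ℝ φ₂) z) z := fun z hz =>
    (((hC2 z hz).fderiv_right (m := 1) (by norm_num)).differentiableAt
      (by norm_num)).hasFDerivAt
  -- segment facts
  have hseg : ∀ y : H₂, ι y ∈ ball x r → ∀ t ∈ Icc (0 : ℝ) 1,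
      ι (y₀ + t • (y - y₀)) ∈ ball x r := by
    intro y hy t ht
    have h : ι (y₀ + t • (y - y₀)) = ι y₀ + t • (ι y - ι y₀) := by
      simp [map_add, map_smul, map_sub]
    rw [h]
    exact (convex_ball x r).add_smul_sub_mem hy₀ball hy ht
  have hcderiv : ∀ (y : H₂) (t : ℝ), HasDerivAt (fun s : ℝ => y₀ + s • (y - y₀)) (y - y₀) t :=
    fun y t => by simpa using ((hasDerivAt_id t).smul_const (y - y₀)).const_add y₀
  have hnormseg : ∀ (y : H₂), ∀ t ∈ Icc (0 : ℝ) 1,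
      ‖y₀ + t • (y - y₀)‖ ≤ ‖y‖ + 2 * ‖y₀‖ := by
    intro y t ht
    calc ‖y₀ + t • (y - y₀)‖ ≤ ‖y₀‖ + ‖t • (y - y₀)‖ := norm_add_le _ _
      _ = ‖y₀‖ + |t| * ‖y - y₀‖ := by rw [norm_smul, Real.norm_eq_abs]
      _ ≤ ‖y₀‖ + 1 * ‖y - y₀‖ := by
          have h : |t| ≤ 1 := abs_le.2 ⟨by linarith [ht.1], ht.2⟩
          gcongr
      _ ≤ ‖y₀‖ + 1 * (‖y‖ + ‖y₀‖) := by have := norm_sub_le y y₀; gcongr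
      _ = ‖y‖ + 2 * ‖y₀‖ := by ring
  have hιsub : ∀ y : H₂, ι y ∈ ball x r → ‖ι (y - y₀)‖ ≤ 2 * r := by
    intro y hy
    have h1 : ‖ι y - x‖ < r := by rwa [mem_ball, dist_eq_norm] at hy
    have h2 : ‖x - ι y₀‖ < r := by rwa [dist_eq_norm] at hy₀
    have h3 : ι (y - y₀) = (ι y - x) + (x - ι y₀) := by rw [map_sub]; abel
    calc ‖ι (y - y₀)‖ = ‖(ι y - x) + (x - ι y₀)‖ := by rw [h3]
      _ ≤ ‖ι y - x‖ + ‖x - ι y₀‖ := norm_add_le _ _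
      _ ≤ 2 * r := by linarith
  -- constants
  set M₁ : ℝ := κ₀ * (1 + 4 * r + ‖y₀‖ + 4 * r * ‖y₀‖) with hM₁
  have hM₁pos : 0 < M₁ := by
    rw [hM₁]
    have h0 : (0:ℝ) ≤ ‖y₀‖ := norm_nonneg _
    have h1 : (0:ℝ) ≤ 4 * r * ‖y₀‖ := by positivity
    exact mul_pos hκ₀ (by linarith)
  set κ₁ : ℝ := ‖fderiv ℝ φ₂ y₀‖ + M₁ with hκ₁def
  have hκ₁pos : 0 < κ₁ := by
    rw [hκ₁def]; exact add_pos_of_nonneg_of_pos (norm_nonneg _) hM₁pos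
  set B : ℝ := κ₁ * (1 + 4 * r) * (1 + 2 * ‖y₀‖) with hB
  have hBpos : 0 < B := by
    rw [hB]
    exact mul_pos (mul_pos hκ₁pos (by linarith)) (by positivity)
  set κ₂ : ℝ := ‖φ₂ y₀‖ + B with hκ₂def
  have hκ₂pos : 0 < κ₂ := by
    rw [hκ₂def]; exact add_pos_of_nonneg_of_pos (norm_nonneg _) hBpos
  -- first-order estimate with constant κ₁
  have key1 : ∀ y : H₂, ι y ∈ ball x r → ∀ η : H₂,
      ‖fderiv ℝ φ₂ y η‖ ≤ κ₁ * (‖η‖ + ‖y‖ * ‖ι η‖) := by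
    intro y hy η
    set v := y - y₀ with hv
    set c : ℝ → H₂ := fun s => y₀ + s • v with hc
    set g : ℝ → H₂ := fun s => fderiv ℝ φ₂ (c s) η with hg
    have hcmem : ∀ t ∈ Icc (0 : ℝ) 1, c t ∈ ι ⁻¹' U₁ := fun t ht =>
      hsubV _ (hseg y hy t ht)
    have hgderiv : ∀ t ∈ Icc (0 : ℝ) 1,
        HasDerivWithinAt g (fderiv ℝ (fderiv ℝ φ₂) (c t) v η) (Icc (0 : ℝ) 1) t := by
      intro t ht
      have h1 : HasDerivWithinAt (fun s => fderiv ℝ φ₂ (c s))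
          (fderiv ℝ (fderiv ℝ φ₂) (c t) v) (Icc (0 : ℝ) 1) t :=
        (hD2 _ (hcmem t ht)).comp_hasDerivWithinAt t ((hcderiv y t).hasDerivWithinAt)
      have h2 := (ContinuousLinearMap.apply ℝ H₂ η).hasFDerivAt.comp_hasDerivWithinAt t h1
      exact h2
    have hbound : ∀ t ∈ Ico (0 : ℝ) 1,
        ‖fderiv ℝ (fderiv ℝ φ₂) (c t) v η‖ ≤ M₁ * (‖η‖ + ‖y‖ * ‖ι η‖) := by
      intro t ht
      have ht' : t ∈ Icc (0 : ℝ) 1 := ⟨ht.1, le_of_lt ht.2⟩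
      have h2 := hest (c t) (hball (hseg y hy t ht')) v η
      have hinner : ‖ι v‖ * ‖η‖ + ‖v‖ * ‖ι η‖ + ‖c t‖ * ‖ι v‖ * ‖ι η‖ ≤
          (1 + 4 * r + ‖y₀‖ + 4 * r * ‖y₀‖) * (‖η‖ + ‖y‖ * ‖ι η‖) :=
        tame_arith1 hr (norm_nonneg _) (norm_nonneg _) (norm_nonneg _) (norm_nonneg _)
          (hι_norm η) (norm_nonneg _) (norm_nonneg _) (norm_nonneg _)
          (hιsub y hy) (norm_sub_le y y₀) (hnormseg y t ht')
      calc ‖fderiv ℝ (fderiv ℝ φ₂) (c t) v η‖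
          ≤ κ₀ * (‖ι v‖ * ‖η‖ + ‖v‖ * ‖ι η‖ + ‖c t‖ * ‖ι v‖ * ‖ι η‖) := h2
        _ ≤ κ₀ * ((1 + 4 * r + ‖y₀‖ + 4 * r * ‖y₀‖) * (‖η‖ + ‖y‖ * ‖ι η‖)) :=
            mul_le_mul_of_nonneg_left hinner hκ₀.le
        _ = M₁ * (‖η‖ + ‖y‖ * ‖ι η‖) := by rw [hM₁]; ring
    have hmvt := norm_image_sub_le_of_norm_deriv_le_segment' hgderiv hbound 1
      (right_mem_Icc.2 zero_le_one)
    have hg1 : g 1 = fderiv ℝ φ₂ y η := by simp [hg, hc, hv]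
    have hg0 : g 0 = fderiv ℝ φ₂ y₀ η := by simp [hg, hc]
    rw [hg1, hg0, sub_zero, mul_one] at hmvt
    have h3 : ‖fderiv ℝ φ₂ y₀ η‖ ≤ ‖fderiv ℝ φ₂ y₀‖ * ‖η‖ :=
      (fderiv ℝ φ₂ y₀).le_opNorm η
    have h4 : ‖fderiv ℝ φ₂ y η‖ ≤ ‖fderiv ℝ φ₂ y₀ η‖ + M₁ * (‖η‖ + ‖y‖ * ‖ι η‖) := by
      have h5 := norm_sub_norm_le (fderiv ℝ φ₂ y η) (fderiv ℝ φ₂ y₀ η)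
      linarith [hmvt]
    have h0b : (0:ℝ) ≤ ‖y‖ * ‖ι η‖ := mul_nonneg (norm_nonneg _) (norm_nonneg _)
    have h6 : ‖fderiv ℝ φ₂ y₀‖ * ‖η‖ ≤ ‖fderiv ℝ φ₂ y₀‖ * (‖η‖ + ‖y‖ * ‖ι η‖) :=
      mul_le_mul_of_nonneg_left (by linarith) (norm_nonneg _)
    rw [hκ₁def, add_mul]
    linarith
  -- zeroth-order estimate with constant κ₂
  have key0 : ∀ y : H₂, ι y ∈ ball x r → ‖φ₂ y‖ ≤ κ₂ * (1 + ‖y‖) := by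
    intro y hy
    set v := y - y₀ with hv
    set c : ℝ → H₂ := fun s => y₀ + s • v with hc
    set h : ℝ → H₂ := fun s => φ₂ (c s) with hh
    have hcmem : ∀ t ∈ Icc (0 : ℝ) 1, c t ∈ ι ⁻¹' U₁ := fun t ht =>
      hsubV _ (hseg y hy t ht)
    have hhderiv : ∀ t ∈ Icc (0 : ℝ) 1,
        HasDerivWithinAt h (fderiv ℝ φ₂ (c t) v) (Icc (0 : ℝ) 1) t := fun t ht =>
      (hD1 _ (hcmem t ht)).comp_hasDerivWithinAt t ((hcderiv y t).hasDerivWithinAt)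
    have hbound : ∀ t ∈ Ico (0 : ℝ) 1,
        ‖fderiv ℝ φ₂ (c t) v‖ ≤ B * (1 + ‖y‖) := by
      intro t ht
      have ht' : t ∈ Icc (0 : ℝ) 1 := ⟨ht.1, le_of_lt ht.2⟩
      have h2 := key1 (c t) (hseg y hy t ht') v
      have hinner : ‖v‖ + ‖c t‖ * ‖ι v‖ ≤ (1 + 4 * r) * (1 + 2 * ‖y₀‖) * (1 + ‖y‖) :=
        tame_arith2 hr (norm_nonneg _) (norm_nonneg _) (norm_nonneg _) (norm_nonneg _)
          (norm_nonneg _) (hιsub y hy) (norm_sub_le y y₀) (hnormseg y t ht')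
      calc ‖fderiv ℝ φ₂ (c t) v‖ ≤ κ₁ * (‖v‖ + ‖c t‖ * ‖ι v‖) := h2
        _ ≤ κ₁ * ((1 + 4 * r) * (1 + 2 * ‖y₀‖) * (1 + ‖y‖)) :=
            mul_le_mul_of_nonneg_left hinner hκ₁pos.le
        _ = B * (1 + ‖y‖) := by rw [hB]; ring
    have hmvt := norm_image_sub_le_of_norm_deriv_le_segment' hhderiv hbound 1
      (right_mem_Icc.2 zero_le_one)
    have hh1 : h 1 = φ₂ y := by simp [hh, hc, hv]
    have hh0 : h 0 = φ₂ y₀ := by simp [hh, hc]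
    rw [hh1, hh0, sub_zero, mul_one] at hmvt
    have h4 : ‖φ₂ y‖ ≤ ‖φ₂ y₀‖ + B * (1 + ‖y‖) := by
      have h5 := norm_sub_norm_le (φ₂ y) (φ₂ y₀)
      linarith [hmvt]
    have h6 : ‖φ₂ y₀‖ * 1 ≤ ‖φ₂ y₀‖ * (1 + ‖y‖) :=
      mul_le_mul_of_nonneg_left (by linarith [norm_nonneg y]) (norm_nonneg _)
    rw [hκ₂def, add_mul]
    rw [mul_one] at h6
    linarith
  -- combine
  refine ⟨ball x r, fun z hz => hW₀U (hball hz), isOpen_ball, mem_ball_self hr,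
    κ₀ + κ₁ + κ₂, by linarith, ?_⟩
  intro y hy ξ η
  have h0 : (0:ℝ) ≤ 1 + ‖y‖ := by positivity
  have h1 : (0:ℝ) ≤ ‖η‖ + ‖y‖ * ‖ι η‖ := by positivity
  have h2 : (0:ℝ) ≤ ‖ι ξ‖ * ‖η‖ + ‖ξ‖ * ‖ι η‖ + ‖y‖ * ‖ι ξ‖ * ‖ι η‖ := by positivity
  exact ⟨(key0 y hy).trans (mul_le_mul_of_nonneg_right (by linarith) h0),
    (key1 y hy η).trans (mul_le_mul_of_nonneg_right (by linarith) h1),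
    (hest y (hball hy) ξ η).trans (mul_le_mul_of_nonneg_right (by linarith) h2)⟩
end

section
/- Suppose φ : U₁ → H₁ is (H₁,H₂)-tame. Then for every x ∈ U₁ there exist an H₁-open neighborhood W ⊆ U₁ of x and a constant κ > 0 such that for all y₀, y₁ ∈ W ∩ H₂ and all η ∈ H₂ one has |(d(φ|_{U₂})|_{y₁} − d(φ|_{U₂})|_{y₀})η|₂ ≤ κ(|y₁ − y₀|₁|η|₂ + |y₁ − y₀|₂|η|₁) + (κ/2)(|y₁|₂ + |y₀|₂)|y₁ − y₀|₁|η|₁. -/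
open Metric Set

/-- **Differences estimate** (Lemma `le:tame-3`). -/
theorem tame_difference_estimate {H₁ H₂ : Type*}
    [NormedAddCommGroup H₁] [InnerProductSpace ℝ H₁] [CompleteSpace H₁]
    [NormedAddCommGroup H₂] [InnerProductSpace ℝ H₂] [CompleteSpace H₂]
    (ι : H₂ →L[ℝ] H₁) (hι_inj : Function.Injective ι)
    (hι_dense : DenseRange ι) (hι_norm : ∀ x : H₂, ‖ι x‖ ≤ ‖x‖)
    {U₁ : Set H₁} (hU₁ : IsOpen U₁)
    {φ : H₁ → H₁} {φ₂ : H₂ → H₂} (hφ : IsTame ι U₁ φ φ₂) :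
    ∀ x ∈ U₁, ∃ W : Set H₁, W ⊆ U₁ ∧ IsOpen W ∧ x ∈ W ∧ ∃ κ : ℝ, 0 < κ ∧
      ∀ y₀ y₁ : H₂, ι y₀ ∈ W → ι y₁ ∈ W → ∀ η : H₂,
        ‖fderiv ℝ φ₂ y₁ η - fderiv ℝ φ₂ y₀ η‖ ≤
          κ * (‖ι y₁ - ι y₀‖ * ‖η‖ + ‖y₁ - y₀‖ * ‖ι η‖)
            + (κ / 2) * (‖y₁‖ + ‖y₀‖) * ‖ι y₁ - ι y₀‖ * ‖ι η‖ := by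
  intro x hx
  obtain ⟨hφ1, hφeq, hφ2, htame⟩ := hφ
  obtain ⟨W, hWU, hWopen, hxW, κ, hκ, hbound⟩ := htame x hx
  obtain ⟨r, hr, hball⟩ := Metric.isOpen_iff.1 hWopen x hxW
  have hVopen : IsOpen (ι ⁻¹' U₁) := hU₁.preimage ι.continuous
  refine ⟨ball x r, (hball.trans hWU), isOpen_ball, mem_ball_self hr, 2 * κ,
    by linarith, ?_⟩
  intro y₀ y₁ hy₀ hy₁ η
  set v : H₂ := y₁ - y₀ with hvdef
  set γ : ℝ → H₂ := fun t => y₀ + t • v with hγdef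
  have hγmem : ∀ t ∈ Icc (0:ℝ) 1, ι (γ t) ∈ ball x r := by
    intro t ht
    have h1 : ι (γ t) = (1 - t) • (ι y₀) + t • (ι y₁) := by
      simp only [hγdef, hvdef, map_add, map_smul, map_sub, smul_sub, sub_smul, one_smul]
      abel
    rw [h1]
    exact (convex_ball x r) hy₀ hy₁ (by linarith [ht.2]) ht.1 (by ring)
  have hderiv : ∀ t ∈ Icc (0:ℝ) 1,
      HasDerivAt (fun t => fderiv ℝ φ₂ (γ t) η)
        (fderiv ℝ (fderiv ℝ φ₂) (γ t) v η) t := by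
    intro t ht
    have hmem : γ t ∈ ι ⁻¹' U₁ := hWU (hball (hγmem t ht))
    have hca : ContDiffAt ℝ 2 φ₂ (γ t) := hφ2.contDiffAt (hVopen.mem_nhds hmem)
    have hd2 : DifferentiableAt ℝ (fderiv ℝ φ₂) (γ t) := by
      have h := hca.fderiv_right (m := 1) (by norm_num)
      exact h.differentiableAt (by norm_num)
    have hγ : HasDerivAt γ v t := by
      simpa [hγdef] using ((hasDerivAt_id t).smul_const v).const_add y₀
    have hc := hd2.hasFDerivAt.comp_hasDerivAt t hγ
    have h := hc.clm_apply (hasDerivAt_const t η)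
    simpa using h
  set M : ℝ := κ * (‖ι v‖ * ‖η‖ + ‖v‖ * ‖ι η‖) +
      κ * (‖y₀‖ + ‖y₁‖) * (‖ι v‖ * ‖ι η‖) with hMdef
  have hbnd : ∀ t ∈ Ico (0:ℝ) 1, ‖fderiv ℝ (fderiv ℝ φ₂) (γ t) v η‖ ≤ M := by
    intro t ht
    have ht' : t ∈ Icc (0:ℝ) 1 := ⟨ht.1, le_of_lt ht.2⟩
    have h1 := hbound (γ t) (hball (hγmem t ht')) v η
    have hγnorm : ‖γ t‖ ≤ ‖y₀‖ + ‖y₁‖ := by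
      have h2 : γ t = (1 - t) • y₀ + t • y₁ := by
        simp only [hγdef, hvdef, smul_sub, sub_smul, one_smul]; abel
      calc ‖γ t‖ ≤ ‖(1 - t) • y₀‖ + ‖t • y₁‖ := by rw [h2]; exact norm_add_le _ _
        _ = (1 - t) * ‖y₀‖ + t * ‖y₁‖ := by
            rw [norm_smul, norm_smul, Real.norm_eq_abs, Real.norm_eq_abs,
              abs_of_nonneg (by linarith [ht.2] : (0:ℝ) ≤ 1 - t), abs_of_nonneg ht.1]
        _ ≤ ‖y₀‖ + ‖y₁‖ := by
            have := norm_nonneg y₀; have := norm_nonneg y₁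
            nlinarith [ht.1, ht.2.le]
    refine h1.trans ?_
    have hc1 : (0:ℝ) ≤ ‖ι v‖ * ‖ι η‖ := mul_nonneg (norm_nonneg _) (norm_nonneg _)
    rw [hMdef]
    nlinarith [mul_le_mul_of_nonneg_right hγnorm hc1]
  have hMVT := norm_image_sub_le_of_norm_deriv_le_segment_01'
    (f := fun t => fderiv ℝ φ₂ (γ t) η)
    (f' := fun t => fderiv ℝ (fderiv ℝ φ₂) (γ t) v η)
    (fun t ht => (hderiv t ht).hasDerivWithinAt) hbnd
  have hγ1 : γ 1 = y₁ := by simp [hγdef, hvdef]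
  have hγ0 : γ 0 = y₀ := by simp [hγdef]
  simp only [hγ1, hγ0] at hMVT
  have hιv : ι v = ι y₁ - ι y₀ := map_sub ι y₁ y₀
  refine hMVT.trans ?_
  rw [hMdef, hιv, hvdef]
  have h1 : (0:ℝ) ≤ ‖ι y₁ - ι y₀‖ * ‖η‖ + ‖y₁ - y₀‖ * ‖ι η‖ := by positivity
  nlinarith [mul_nonneg (mul_nonneg (norm_nonneg (ι y₁ - ι y₀)) (norm_nonneg (ι η)))
    (add_nonneg (norm_nonneg y₀) (norm_nonneg y₁))]
end

section
/- Suppose φ : U₁ → H₁ is (H₁,H₂)-tame, 0 ∈ U₁, and φ(0) = 0. Then there exist an H₁-open neighborhood W₀ ⊆ U₁ of 0 and a constant κ > 0 such that |φ(y)|₂ ≤ κ|y|₂ for every y ∈ W₀ ∩ H₂. -/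
open Metric Set

/-- If `φ` is tame, `0 ∈ U₁` and `φ 0 = 0`, then near `0` the restriction of
`φ` satisfies the linear estimate `|φ(y)|₂ ≤ κ |y|₂` (estimate `eq:phi(y)`). -/
theorem tame_linear_estimate_at_zero {H₁ H₂ : Type*}
    [NormedAddCommGroup H₁] [InnerProductSpace ℝ H₁] [CompleteSpace H₁]
    [NormedAddCommGroup H₂] [InnerProductSpace ℝ H₂] [CompleteSpace H₂]
    (ι : H₂ →L[ℝ] H₁) (hι_inj : Function.Injective ι)
    (hι_dense : DenseRange ι) (hι_norm : ∀ x : H₂, ‖ι x‖ ≤ ‖x‖)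
    {U₁ : Set H₁} (hU₁ : IsOpen U₁)
    {φ : H₁ → H₁} {φ₂ : H₂ → H₂} (hφ : IsTame ι U₁ φ φ₂)
    (h0 : (0 : H₁) ∈ U₁) (hφ0 : φ 0 = 0) :
    ∃ W₀ : Set H₁, W₀ ⊆ U₁ ∧ IsOpen W₀ ∧ (0 : H₁) ∈ W₀ ∧ ∃ κ : ℝ, 0 < κ ∧
      ∀ y : H₂, ι y ∈ W₀ → ‖φ₂ y‖ ≤ κ * ‖y‖ := by
  obtain ⟨hφ₁, hcomm, hφ₂, htame⟩ := hφ
  obtain ⟨W, hWU, hWopen, hW0, κ, hκ, hbound⟩ := htame 0 h0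
  -- choose a small radius
  obtain ⟨r', hr'pos, hr'⟩ := Metric.isOpen_iff.1 hWopen 0 hW0
  set r : ℝ := min r' 1 with hr_def
  have hrpos : 0 < r := lt_min hr'pos one_pos
  have hr1 : r ≤ 1 := min_le_right _ _
  have hball : ball (0 : H₁) r ⊆ W := (ball_subset_ball (min_le_left _ _)).trans hr'
  -- φ₂ 0 = 0
  have hι0 : ι (0 : H₂) = 0 := map_zero ι
  have hφ₂0 : φ₂ 0 = 0 := by
    apply hι_inj
    rw [← hcomm 0 (by rw [hι0]; exact h0), hι0, hφ0]
  -- differentiability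
  have hVopen : IsOpen (ι ⁻¹' U₁) := hU₁.preimage ι.continuous
  have hdiff : DifferentiableOn ℝ φ₂ (ι ⁻¹' U₁) :=
    hφ₂.differentiableOn (by norm_num)
  have hfd : ContDiffOn ℝ 1 (fderiv ℝ φ₂) (ι ⁻¹' U₁) :=
    hφ₂.fderiv_of_isOpen hVopen (by norm_num)
  have hdiff_at : ∀ x ∈ ι ⁻¹' U₁, DifferentiableAt ℝ φ₂ x := fun x hx =>
    (hdiff x hx).differentiableAt (hVopen.mem_nhds hx)
  have hfd_at : ∀ x ∈ ι ⁻¹' U₁, DifferentiableAt ℝ (fderiv ℝ φ₂) x := fun x hx =>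
    ((hfd.differentiableOn one_ne_zero) x hx).differentiableAt (hVopen.mem_nhds hx)
  refine ⟨ball 0 r, hball.trans hWU, isOpen_ball, mem_ball_self hrpos,
    ‖fderiv ℝ φ₂ 0‖ + 3 * κ, by positivity, fun y hy => ?_⟩
  -- segment membership
  have hseg : ∀ t : ℝ, t ∈ Icc (0:ℝ) 1 → ι (t • y) ∈ ball (0 : H₁) r := by
    intro t ht
    rw [map_smul]
    rw [mem_ball_zero_iff] at hy ⊢
    calc ‖t • ι y‖ = |t| * ‖ι y‖ := by rw [norm_smul, Real.norm_eq_abs]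
      _ ≤ 1 * ‖ι y‖ := by
          apply mul_le_mul_of_nonneg_right _ (norm_nonneg _)
          rw [abs_of_nonneg ht.1]; exact ht.2
      _ < r := by rwa [one_mul]
  have hsegU : ∀ t : ℝ, t ∈ Icc (0:ℝ) 1 → t • y ∈ ι ⁻¹' U₁ := fun t ht =>
    hWU (hball (hseg t ht))
  have hsegW : ∀ t : ℝ, t ∈ Icc (0:ℝ) 1 → ι (t • y) ∈ W := fun t ht => hball (hseg t ht)
  have hιy1 : ‖ι y‖ ≤ 1 := le_trans (le_of_lt (mem_ball_zero_iff.1 hy)) hr1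
  -- M bound on the second derivative along the segment
  set M : ℝ := 3 * κ * ‖y‖ with hM_def
  have hMnn : 0 ≤ M := by positivity
  have hD2 : ∀ t : ℝ, t ∈ Icc (0:ℝ) 1 →
      ‖fderiv ℝ (fderiv ℝ φ₂) (t • y) y y‖ ≤ M := by
    intro t ht
    refine (hbound (t • y) (hsegW t ht) y y).trans ?_
    have h1 : ‖ι y‖ * ‖y‖ ≤ ‖y‖ :=
      mul_le_of_le_one_left (norm_nonneg _) hιy1
    have h2 : ‖y‖ * ‖ι y‖ ≤ ‖y‖ :=
      mul_le_of_le_one_right (norm_nonneg _) hιy1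
    have h3 : ‖t • y‖ * ‖ι y‖ * ‖ι y‖ ≤ ‖y‖ := by
      have hty : ‖t • y‖ ≤ ‖y‖ := by
        rw [norm_smul, Real.norm_eq_abs, abs_of_nonneg ht.1]
        exact mul_le_of_le_one_left (norm_nonneg _) ht.2
      calc ‖t • y‖ * ‖ι y‖ * ‖ι y‖ ≤ ‖y‖ * 1 * 1 := by
            apply mul_le_mul (mul_le_mul hty hιy1 (norm_nonneg _) (norm_nonneg _)) hιy1
              (norm_nonneg _)
            positivity
        _ = ‖y‖ := by ring
    have := add_le_add (add_le_add h1 h2) h3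
    nlinarith [hκ.le]
  -- the curve derivative: g t = fderiv φ₂ (t•y) y
  set g : ℝ → H₂ := fun t => fderiv ℝ φ₂ (t • y) y with hg_def
  have hc : ∀ t : ℝ, HasDerivAt (fun s : ℝ => s • y) y t := fun t => by
    simpa using (hasDerivAt_id t).smul_const y
  have hg' : ∀ t ∈ Icc (0:ℝ) 1,
      HasDerivAt g (fderiv ℝ (fderiv ℝ φ₂) (t • y) y y) t := by
    intro t ht
    have h1 : HasDerivAt (fun s : ℝ => fderiv ℝ φ₂ (s • y))
        (fderiv ℝ (fderiv ℝ φ₂) (t • y) y) t :=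
      ((hfd_at _ (hsegU t ht)).hasFDerivAt).comp_hasDerivAt t (hc t)
    have := h1.clm_apply (hasDerivAt_const t y)
    simpa using this
  have hg_bound : ∀ t ∈ Icc (0:ℝ) 1, ‖g t - g 0‖ ≤ M * t := by
    have := norm_image_sub_le_of_norm_deriv_le_segment'
      (f := g) (f' := fun t => fderiv ℝ (fderiv ℝ φ₂) (t • y) y y)
      (fun t ht => (hg' t ht).hasDerivWithinAt)
      (fun t ht => hD2 t (Ico_subset_Icc_self ht))
    intro t ht
    simpa using this t ht
  -- h t = φ₂ (t•y) - t • g 0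
  set h : ℝ → H₂ := fun t => φ₂ (t • y) - t • g 0 with hh_def
  have hh' : ∀ t ∈ Icc (0:ℝ) 1, HasDerivAt h (g t - g 0) t := by
    intro t ht
    have h1 : HasDerivAt (fun s : ℝ => φ₂ (s • y)) (g t) t :=
      ((hdiff_at _ (hsegU t ht)).hasFDerivAt).comp_hasDerivAt t (hc t)
    have h2 : HasDerivAt (fun s : ℝ => s • g 0) (g 0) t := by
      simpa using (hasDerivAt_id t).smul_const (g 0)
    exact h1.sub h2
  have hh_bound : ‖h 1 - h 0‖ ≤ M :=
    norm_image_sub_le_of_norm_deriv_le_segment_01'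
      (fun t ht => (hh' t ht).hasDerivWithinAt)
      (fun t ht => by
        calc ‖g t - g 0‖ ≤ M * t := hg_bound t (Ico_subset_Icc_self ht)
          _ ≤ M * 1 := by
              apply mul_le_mul_of_nonneg_left ht.2.le hMnn
          _ = M := mul_one M)
  have hh1 : h 1 = φ₂ y - g 0 := by simp [hh_def]
  have hh0 : h 0 = 0 := by simp [hh_def, hφ₂0]
  rw [hh1, hh0, sub_zero] at hh_bound
  have hg0 : ‖g 0‖ ≤ ‖fderiv ℝ φ₂ 0‖ * ‖y‖ := by
    simpa [hg_def] using (fderiv ℝ φ₂ ((0:ℝ) • y)).le_opNorm y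
  calc ‖φ₂ y‖ = ‖(φ₂ y - g 0) + g 0‖ := by rw [sub_add_cancel]
    _ ≤ ‖φ₂ y - g 0‖ + ‖g 0‖ := norm_add_le _ _
    _ ≤ M + ‖fderiv ℝ φ₂ 0‖ * ‖y‖ := add_le_add hh_bound hg0
    _ = (‖fderiv ℝ φ₂ 0‖ + 3 * κ) * ‖y‖ := by rw [hM_def]; ring
end
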